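/- arXiv:1404.6821 — 5 statements merged into one kernel-verified Lean document; each statement's English description precedes it below -/
import Mathlib

section
/- Let G be a generalized theta graph consisting of two vertices u and v joined by at least three internally vertex-disjoint paths, such that every internal path (i.e., every component of G − {u, v}) has an odd number of vertices. Let L be a list assignment on G with |L(x)| = 4 for every vertex x, write L(u) = {c_0, c_1, c_2, c_3} and L(v) = {c'_0, c'_1, c'_2, c'_3} indexed so that c'_j = c_j whenever c_j ∈ L(u) ∩ L(v). Then every internal path P blocks at most 2 of the six simple pairs; and if an internal path P blocks exactly 2 simple pairs, then S_L(P) = 2|V(P)| + 2 and P has exactly one heavy couple and exactly two light couples. -/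
/-- Given the lists `L(v_1), …, L(v_n)` of a path (as a list of finsets, in order) and a
"previous" set, the sequence `X_1 = L(v_1)`, `X_i = L(v_i) \ X_{i-1}`. -/
def Xseq : Finset ℕ → List (Finset ℕ) → List (Finset ℕ)
  | _, [] => []
  | prev, l :: ls => (l \ prev) :: Xseq (l \ prev) ls

/-- `S_L(P) = Σ_{i=1}^n |X_i|`. -/
def SL (ls : List (Finset ℕ)) : ℕ := ((Xseq ∅ ls).map Finset.card).sum

/-- `X_{i+1}` (0-indexed access to the sequence `X_1, …, X_n`). -/
def Xat (ls : List (Finset ℕ)) (i : ℕ) : Finset ℕ := (Xseq ∅ ls).getD i ∅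

/-- `A = ∩_{x ∈ V(P)} L(x)`. -/
def Aset : List (Finset ℕ) → Finset ℕ
  | [] => ∅
  | a :: rest => rest.foldl (· ∩ ·) a

/-- For a colour `c`, the least 0-indexed position `i` with `c ∉ L(v_{i+1})`
(so the paper's `f(c)` is `firstMissing + 1`). -/
noncomputable def firstMissing (ls : List (Finset ℕ)) (c : ℕ) : ℕ :=
  sInf {i | i < ls.length ∧ c ∉ ls.getD i ∅}

open Classical in
/-- `X̂_1 = { c ∈ L(v_1) \ A : f(c) is even }` (with the paper's 1-indexed `f`,
i.e. `firstMissing` is odd). -/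
noncomputable def hatX1 (ls : List (Finset ℕ)) : Finset ℕ :=
  (ls.getD 0 ∅ \ Aset ls).filter fun c => Odd (firstMissing ls c)

/-- `X̂_n = X_n \ A`. -/
def hatXn (ls : List (Finset ℕ)) : Finset ℕ := Xat ls (ls.length - 1) \ Aset ls

/-- `L[p,q]`: delete the colours of `p` from `L(v_1)` and the colours of `q` from `L(v_n)`. -/
def delEnds (p q : Finset ℕ) (ls : List (Finset ℕ)) : List (Finset ℕ) :=
  ((ls.modifyHead (· \ p)).reverse.modifyHead (· \ q)).reverse

/-- The damage `dam_{L,P}(p,q) = S_L(P) − S_{L[p,q]}(P)` (as an integer). -/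
def damZ (ls : List (Finset ℕ)) (p q : Finset ℕ) : ℤ :=
  (SL ls : ℤ) - SL (delEnds p q ls)

/-- The path `v_1 ⋯ v_n` with lists `L(v_1), …, L(v_n)` admits a `b`-tuple list
colouring: consecutive vertices receive disjoint `b`-subsets of their lists. -/
def PathListColorable (b : ℕ) (ls : List (Finset ℕ)) : Prop :=
  ∃ f : ℕ → Finset ℕ,
    (∀ i, i < ls.length → f i ⊆ ls.getD i ∅ ∧ (f i).card = b) ∧
    (∀ i, i + 1 < ls.length → Disjoint (f i) (f (i + 1)))

def bN : List Bool → ℕ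
  | [] => 0
  | false :: bs => bN bs
  | [true] => 1
  | true :: _ :: bs => 1 + bN bs

@[simp] lemma bN_nil : bN [] = 0 := rfl
@[simp] lemma bN_false_cons (bs : List Bool) : bN (false :: bs) = bN bs := by cases bs <;> rfl
@[simp] lemma bN_single_true : bN [true] = 1 := rfl
@[simp] lemma bN_true_cons_cons (x : Bool) (bs : List Bool) :
    bN (true :: x :: bs) = 1 + bN bs := rfl

lemma bN_true_cons (bs : List Bool) : bN (true :: bs) = 1 + bN bs.tail := by
  cases bs <;> rfl

/-- last-entry-falsifying operation -/
def bml (b : List Bool) : List Bool := (b.reverse.modifyHead (fun a => a && false)).reverse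

@[simp] lemma bml_nil : bml [] = [] := rfl
@[simp] lemma bml_single (x : Bool) : bml [x] = [false] := by
  simp [bml, List.modifyHead]

lemma bml_cons {bs : List Bool} (h : bs ≠ []) (x : Bool) : bml (x :: bs) = x :: bml bs := by
  obtain ⟨a, t, ht⟩ := List.exists_cons_of_ne_nil (fun hh => h (List.reverse_eq_nil_iff.mp hh) : bs.reverse ≠ [])
  simp only [bml, List.reverse_cons, ht, List.cons_append, List.modifyHead]
  simp

lemma bml_tail (b : List Bool) : (bml b).tail = bml b.tail := by
  cases b with
  | nil => rfl
  | cons x bs =>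
    cases bs with
    | nil => simp
    | cons y t => rw [bml_cons (by simp)]; rfl

@[simp] lemma bml_length (b : List Bool) : (bml b).length = b.length := by
  simp [bml]

def bT (b : List Bool) : ℕ := b.countP id

@[simp] lemma bT_nil : bT [] = 0 := rfl
@[simp] lemma bT_cons (x : Bool) (bs : List Bool) :
    bT (x :: bs) = (if x then 1 else 0) + bT bs := by
  cases x <;> simp [bT, List.countP_cons] <;> omega

def bAlt : List Bool → ℤ
  | [] => 0
  | x :: bs => (if x then 1 else 0) - bAlt bs

@[simp] lemma bAlt_nil : bAlt [] = 0 := rfl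
@[simp] lemma bAlt_cons (x : Bool) (bs : List Bool) :
    bAlt (x :: bs) = (if x then 1 else 0) - bAlt bs := rfl

def bAll (b : List Bool) : ℕ := if b.all id then 1 else 0

@[simp] lemma bAll_nil : bAll [] = 1 := rfl
@[simp] lemma bAll_cons (x : Bool) (bs : List Bool) :
    bAll (x :: bs) = (if x then 1 else 0) * bAll bs := by
  cases x <;> simp [bAll]

lemma twoStepRec {P : List Bool → Prop} (h0 : P []) (h1 : ∀ x, P [x])
    (h2 : ∀ x y bs, P bs → P (y :: bs) → P (x :: y :: bs)) : ∀ b, P b := by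
  have key : ∀ n (b : List Bool), b.length ≤ n → P b := by
    intro n
    induction n with
    | zero => intro b hb; rw [List.length_eq_zero_iff.mp (Nat.le_zero.mp hb)]; exact h0
    | succ n ih =>
      intro b hb
      match b with
      | [] => exact h0
      | [x] => exact h1 x
      | x :: y :: bs =>
        have l1 : bs.length ≤ n := by simp at hb; omega
        have l2 : (y :: bs).length ≤ n := by simp at hb ⊢; omega
        exact h2 x y bs (ih bs l1) (ih (y :: bs) l2)
  exact fun b => key b.length b le_rfl

lemma bN_tail : ∀ b : List Bool, bN b.tail ≤ bN b ∧ bN b ≤ bN b.tail + 1 := by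
  refine twoStepRec (by simp) (fun x => by cases x <;> simp) ?_
  intro x y bs ih1 ih2
  cases x with
  | false => simpa using le_refl (bN (y :: bs))
  | true =>
    simp only [bN_true_cons_cons, List.tail_cons]
    simp only [List.tail_cons] at ih2
    omega

lemma bN_bml : ∀ b : List Bool, bN (bml b) ≤ bN b ∧ bN b ≤ bN (bml b) + 1 := by
  refine twoStepRec (by simp) (fun x => by cases x <;> simp) ?_
  intro x y bs ih1 ih2
  rw [bml_cons (by simp)]
  cases x with
  | false => simpa using ih2
  | true =>
    rw [bN_true_cons (bml (y :: bs)), bml_tail, bN_true_cons_cons]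
    simp only [List.tail_cons]
    omega

lemma E8 : ∀ b : List Bool, (bT b : ℤ) + bAlt b ≤ 2 * bN b ∧ (bT b : ℤ) - bAlt b ≤ 2 * bN b := by
  refine twoStepRec (by simp) (fun x => by cases x <;> simp) ?_
  intro x y bs ih1 ih2
  cases x <;> cases y <;> simp at ih2 ⊢ <;> push_cast at * <;> omega

lemma E10 : ∀ b : List Bool, Even b.length → (bT b : ℤ) + bAlt b ≤ 2 * bN (bml b) := by
  refine twoStepRec (by simp) (fun x hx => by simp at hx) ?_
  intro x y bs ih1 _ hev
  have hbs : Even bs.length := by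
    rw [List.length_cons, List.length_cons] at hev
    rw [Nat.even_iff] at hev ⊢; omega
  rcases eq_or_ne bs [] with rfl | hne
  · rw [bml_cons (by simp), bml_single]
    cases x <;> cases y <;> simp
  · rw [bml_cons (by simp), bml_cons hne]
    have h1 := ih1 hbs
    have h2 := (bN_tail (bml bs))
    have h3 := bml_tail bs
    cases x with
    | true =>
      simp only [bT_cons, bAlt_cons, bN_true_cons_cons, if_true]
      push_cast
      omega
    | false =>
      simp only [bT_cons, bAlt_cons, bN_false_cons, if_false]
      cases y with
      | true =>
        rw [bN_true_cons]
        simp only [if_true, List.tail_cons]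
        push_cast
        omega
      | false =>
        simp only [bN_false_cons, if_false]
        push_cast
        omega

lemma E5 : ∀ b : List Bool, Odd b.length → (bT b : ℤ) - bAlt b ≤ 2 * bN b.tail := by
  refine twoStepRec (by simp) (fun x _ => by cases x <;> simp) ?_
  intro x y bs ih1 _ hodd
  have hbs : Odd bs.length := by
    rw [List.length_cons, List.length_cons] at hodd
    rw [Nat.odd_iff] at hodd ⊢; omega
  have h1 := ih1 hbs
  have h2 := (E8 bs).2
  simp only [bT_cons, bAlt_cons, List.tail_cons]
  cases y with
  | true =>
    rw [bN_true_cons]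
    cases x <;> simp <;> push_cast <;> omega
  | false =>
    simp only [bN_false_cons]
    cases x <;> simp <;> push_cast <;> omega

lemma odd_of_cons_cons {x y : Bool} {bs : List Bool} (h : Odd (x :: y :: bs).length) :
    Odd bs.length := by
  rw [List.length_cons, List.length_cons] at h
  rw [Nat.odd_iff] at h ⊢; omega

lemma ne_nil_of_odd {bs : List Bool} (h : Odd bs.length) : bs ≠ [] := by
  intro hh; rw [hh] at h; simp [Nat.odd_iff] at h

lemma E6 : ∀ b : List Bool, Odd b.length → (bT b : ℤ) - bAlt b ≤ 2 * bN (bml b) := by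
  refine twoStepRec (by simp) (fun x _ => by cases x <;> simp) ?_
  intro x y bs ih1 _ hodd
  have hbs : Odd bs.length := odd_of_cons_cons hodd
  have hne := ne_nil_of_odd hbs
  have h1 := ih1 hbs
  rw [bml_cons (by simp), bml_cons hne]
  cases x with
  | true =>
    simp only [bT_cons, bAlt_cons, bN_true_cons_cons, if_true]
    cases y <;> simp <;> push_cast <;> omega
  | false =>
    simp only [bT_cons, bAlt_cons, bN_false_cons, if_false]
    cases y with
    | false => simp; push_cast; omega
    | true =>
      rw [bN_true_cons]
      obtain ⟨z, w, rfl⟩ := List.exists_cons_of_ne_nil hne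
      have hw : Even w.length := by
        rw [List.length_cons, Nat.odd_iff] at hbs
        rw [Nat.even_iff]; omega
      have h10 := E10 w hw
      rw [bml_tail]
      simp only [List.tail_cons, bT_cons, bAlt_cons, if_true]
      cases z <;> simp <;> push_cast <;> omega

lemma E4 : ∀ b : List Bool, Odd b.length →
    2 * (bN b : ℤ) + bT b ≤ 2 * bN b.tail + 2 * bN (bml b) + 2 * bAll b + bAlt b := by
  refine twoStepRec (by simp) (fun x _ => by cases x <;> simp) ?_
  intro x y bs ih1 _ hodd
  have hbs : Odd bs.length := odd_of_cons_cons hodd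
  have hne := ne_nil_of_odd hbs
  rw [bml_cons (by simp), bml_cons hne]
  simp only [List.tail_cons]
  cases x with
  | true =>
    cases y with
    | true =>
      have h1 := ih1 hbs
      simp only [bN_true_cons, bN_false_cons, List.tail_cons, bml_tail, bT_cons,
        bAlt_cons, bAll_cons, if_true, one_mul]
      push_cast
      omega
    | false =>
      have h6 := E6 bs hbs
      simp [bN_true_cons, bml_tail]
      push_cast
      omega
  | false =>
    cases y with
    | true =>
      obtain ⟨z, w, rfl⟩ := List.exists_cons_of_ne_nil hne
      have hw : Even w.length := by
        rw [List.length_cons, Nat.odd_iff] at hbs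
        rw [Nat.even_iff]; omega
      have h10 := E10 w hw
      cases z <;>
        simp [bN_true_cons, bml_tail] <;>
        push_cast at * <;> omega
    | false =>
      have h6 := E6 bs hbs
      simp [bN_true_cons, bml_tail]
      push_cast
      omega

lemma E3 : ∀ b : List Bool, Odd b.length →
    bN b + bN (bml b.tail) = bN b.tail + bN (bml b) + bAll b := by
  refine twoStepRec (by simp) (fun x _ => by cases x <;> simp) ?_
  intro x y bs ih1 _ hodd
  have hbs : Odd bs.length := odd_of_cons_cons hodd
  have hne := ne_nil_of_odd hbs
  rw [bml_cons (by simp), bml_cons hne]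
  simp only [List.tail_cons]
  rw [bml_cons hne]
  cases x with
  | true =>
    cases y with
    | true =>
      have h1 := ih1 hbs
      simp only [bN_true_cons, bN_false_cons, List.tail_cons, bml_tail, bAll_cons,
        if_true, one_mul]
      omega
    | false =>
      simp [bN_true_cons, bml_tail]
      omega
  | false =>
    simp [bN_true_cons, bml_tail]

lemma E9 : ∀ b : List Bool, Odd b.length → b.all id = true →
    bN b = bN b.tail + 1 ∧ bN b = bN (bml b) + 1 := by
  refine twoStepRec (by simp) (fun x _ h => by simp at h; simp [h]) ?_
  intro x y bs ih1 _ hodd hall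
  have hbs : Odd bs.length := odd_of_cons_cons hodd
  have hne := ne_nil_of_odd hbs
  simp only [List.all_cons, Bool.and_eq_true, id] at hall
  obtain ⟨rfl, rfl, hall⟩ := hall
  have h1 := ih1 hbs hall
  rw [bml_cons (by simp), bml_cons hne]
  simp only [bN_true_cons, List.tail_cons, bml_tail]
  have := bN_tail (bml bs)
  have h3 := bml_tail bs
  omega

lemma modifyHead_fun_id {α : Type*} (l : List α) : l.modifyHead (fun a => a) = l := by
  cases l <;> rfl

def dE (s t : Bool) (b : List Bool) : List Bool :=
  ((b.modifyHead (· && !s)).reverse.modifyHead (· && !t)).reverse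

@[simp] lemma dE_ff (b : List Bool) : dE false false b = b := by
  simp [dE, modifyHead_fun_id]

lemma bN_modifyHead_false (b : List Bool) :
    bN (b.modifyHead (fun a => a && false)) = bN b.tail := by
  cases b <;> simp [List.modifyHead]

lemma dE_tf (b : List Bool) : dE true false b = b.modifyHead (fun a => a && false) := by
  simp [dE, modifyHead_fun_id]

lemma dE_ft (b : List Bool) : dE false true b = bml b := by
  simp [dE, bml, modifyHead_fun_id]

lemma bN_dE_tt (b : List Bool) : bN (dE true true b) = bN (bml b.tail) := by
  have : dE true true b = bml (b.modifyHead (fun a => a && false)) := by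
    simp [dE, bml]
  rw [this]
  cases b with
  | nil => simp
  | cons x bs =>
    simp only [List.modifyHead, Bool.and_false]
    cases bs with
    | nil => simp
    | cons y t => rw [bml_cons (by simp)]; simp

def dam1 (s t : Bool) (b : List Bool) : ℤ := (bN b : ℤ) - bN (dE s t b)

@[simp] lemma dam1_ff (b : List Bool) : dam1 false false b = 0 := by simp [dam1]

lemma dam1_tf (b : List Bool) : dam1 true false b = (bN b : ℤ) - bN b.tail := by
  rw [dam1, dE_tf, bN_modifyHead_false]

lemma dam1_ft (b : List Bool) : dam1 false true b = (bN b : ℤ) - bN (bml b) := by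
  rw [dam1, dE_ft]

lemma dam1_tt (b : List Bool) : dam1 true true b = (bN b : ℤ) - bN (bml b.tail) := by
  rw [dam1, bN_dE_tt]

lemma dam1_nonneg (s t : Bool) (b : List Bool) : 0 ≤ dam1 s t b := by
  have h1 := bN_tail b
  have h2 := bN_bml b
  have h3 := bN_bml b.tail
  cases s <;> cases t <;>
    simp only [dam1_ff, dam1_tf, dam1_ft, dam1_tt] <;> push_cast <;> omega

lemma dam1_le (s t : Bool) (b : List Bool) :
    dam1 s t b ≤ (if s then 1 else 0) + (if t then 1 else 0) := by
  have h1 := bN_tail b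
  have h2 := bN_bml b
  have h3 := bN_bml b.tail
  cases s <;> cases t <;>
    simp only [dam1_ff, dam1_tf, dam1_ft, dam1_tt, if_true, if_false] <;>
    push_cast <;> omega

lemma Kbound (s t : Bool) (b : List Bool) (hodd : Odd b.length) :
    2 * dam1 s t b ≤ 2 * (bN b : ℤ) - bT b + bAlt b := by
  have h1 := bN_tail b
  have h5 := E5 b hodd
  have h6 := E6 b hodd
  have h4 := E4 b hodd
  have h3 := E3 b hodd
  cases s <;> cases t <;>
    simp only [dam1_ff, dam1_tf, dam1_ft, dam1_tt] <;> push_cast at * <;> omega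

lemma dam1_split (s1 s2 t1 t2 : Bool) (b : List Bool)
    (hs : (s1 && s2) = false) (ht : (t1 && t2) = false)
    (h12 : (s1 && t2) = false) (h21 : (s2 && t1) = false) :
    dam1 (s1 || s2) (t1 || t2) b = dam1 s1 t1 b + dam1 s2 t2 b := by
  cases s1 <;> cases s2 <;> cases t1 <;> cases t2 <;> simp_all

lemma quadBound (b : List Bool) (hodd : Odd b.length) (s t : Fin 4 → Bool)
    (hs : ∀ i j, s i = true → s j = true → i = j)
    (ht : ∀ i j, t i = true → t j = true → i = j)
    (hst : ∀ i j, s i = true → t j = true → i = j) :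
    2 * (dam1 (s 0) (t 0) b + dam1 (s 1) (t 1) b + dam1 (s 2) (t 2) b + dam1 (s 3) (t 3) b)
      ≤ 2 * (bN b : ℤ) - bT b + bAlt b := by
  have key : ∃ i0 : Fin 4, ∀ i, i ≠ i0 → s i = false ∧ t i = false := by
    by_cases h : ∃ i, s i = true ∨ t i = true
    · obtain ⟨i0, hi0⟩ := h
      refine ⟨i0, fun i hi => ⟨?_, ?_⟩⟩
      · by_contra hsi
        rw [Bool.not_eq_false] at hsi
        rcases hi0 with h' | h'
        · exact hi (hs i i0 hsi h')
        · exact hi (hst i i0 hsi h')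
      · by_contra hti
        rw [Bool.not_eq_false] at hti
        rcases hi0 with h' | h'
        · exact hi ((hst i0 i h' hti).symm)
        · exact hi (ht i i0 hti h')
    · push_neg at h
      exact ⟨0, fun i _ => ⟨by simpa using (h i).1, by simpa using (h i).2⟩⟩
  obtain ⟨i0, hkey⟩ := key
  have hzero : ∀ i, i ≠ i0 → dam1 (s i) (t i) b = 0 := fun i hi => by
    rw [(hkey i hi).1, (hkey i hi).2]; exact dam1_ff b
  have hK := Kbound (s i0) (t i0) b hodd
  have hd := dam1_nonneg (s i0) (t i0) b
  have hsum : dam1 (s 0) (t 0) b + dam1 (s 1) (t 1) b + dam1 (s 2) (t 2) b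
      + dam1 (s 3) (t 3) b = dam1 (s i0) (t i0) b := by
    have hv := i0.isLt
    have hd4 : i0 = 0 ∨ i0 = 1 ∨ i0 = 2 ∨ i0 = 3 := by
      simp only [Fin.ext_iff]; omega
    rcases hd4 with rfl | rfl | rfl | rfl
    · rw [hzero 1 (by decide), hzero 2 (by decide), hzero 3 (by decide)]; omega
    · rw [hzero 0 (by decide), hzero 2 (by decide), hzero 3 (by decide)]; omega
    · rw [hzero 0 (by decide), hzero 1 (by decide), hzero 3 (by decide)]; omega
    · rw [hzero 0 (by decide), hzero 1 (by decide), hzero 2 (by decide)]; omega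
  rw [hsum]
  omega

/-! ### Section B : decomposition over colours -/

def bcnt : Bool → List Bool → ℕ
  | _, [] => 0
  | p, x :: bs => (if x && !p then 1 else 0) + bcnt (x && !p) bs

lemma bcnt_false : ∀ b, bcnt false b = bN b := by
  intro b
  induction b using bN.induct with
  | case1 => rfl
  | case2 bs ih => simpa [bcnt] using ih
  | case3 => rfl
  | case4 x bs ih =>
    show (if true && !false then 1 else 0) + bcnt (true && !false) (x :: bs) = _
    simp only [Bool.not_false, Bool.and_true, if_true]
    show 1 + ((if x && !true then 1 else 0) + bcnt (x && !true) bs) = _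
    simp [ih]

def blf (x : ℕ) (ls : List (Finset ℕ)) : List Bool := ls.map fun l => decide (x ∈ l)

@[simp] lemma blf_nil (x : ℕ) : blf x [] = [] := rfl
@[simp] lemma blf_cons (x : ℕ) (l : Finset ℕ) (ls : List (Finset ℕ)) :
    blf x (l :: ls) = decide (x ∈ l) :: blf x ls := rfl

@[simp] lemma blf_length (x : ℕ) (ls : List (Finset ℕ)) : (blf x ls).length = ls.length := by
  simp [blf]

lemma decide_mem_sdiff (x : ℕ) (l p : Finset ℕ) :
    decide (x ∈ l \ p) = (decide (x ∈ l) && !decide (x ∈ p)) := by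
  by_cases h1 : x ∈ l <;> by_cases h2 : x ∈ p <;> simp [Finset.mem_sdiff, h1, h2]

lemma sum_indicator {U S : Finset ℕ} (h : S ⊆ U) :
    ∑ x ∈ U, (if x ∈ S then 1 else 0) = S.card := by
  rw [Finset.sum_ite_mem, Finset.inter_eq_right.mpr h, Finset.card_eq_sum_ones]

lemma Xseq_decomp (U : Finset ℕ) :
    ∀ (ls : List (Finset ℕ)) (prev : Finset ℕ), (∀ l ∈ ls, l ⊆ U) →
    ((Xseq prev ls).map Finset.card).sum = ∑ x ∈ U, bcnt (decide (x ∈ prev)) (blf x ls) := by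
  intro ls
  induction ls with
  | nil => intro prev _; simp [Xseq, bcnt]
  | cons l ls ih =>
    intro prev hsub
    show (l \ prev).card + ((Xseq (l \ prev) ls).map Finset.card).sum = _
    rw [ih (l \ prev) (fun l' hl' => hsub l' (List.mem_cons_of_mem _ hl'))]
    have : ∀ x, bcnt (decide (x ∈ prev)) (blf x (l :: ls))
        = (if x ∈ l \ prev then 1 else 0) + bcnt (decide (x ∈ l \ prev)) (blf x ls) := by
      intro x
      show (if decide (x ∈ l) && !decide (x ∈ prev) then 1 else 0)
          + bcnt (decide (x ∈ l) && !decide (x ∈ prev)) (blf x ls) = _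
      rw [← decide_mem_sdiff]
      simp
    simp only [this]
    rw [Finset.sum_add_distrib, sum_indicator (fun x hx => hsub l (by simp) (Finset.mem_sdiff.mp hx).1)]

lemma SL_decomp (U : Finset ℕ) (ls : List (Finset ℕ)) (hsub : ∀ l ∈ ls, l ⊆ U) :
    SL ls = ∑ x ∈ U, bN (blf x ls) := by
  rw [SL, Xseq_decomp U ls ∅ hsub]
  refine Finset.sum_congr rfl fun x _ => ?_
  rw [show decide (x ∈ (∅ : Finset ℕ)) = false by simp, bcnt_false]

lemma map_modifyHead_comm {α β : Type*} (f : α → β) (g : α → α) (g' : β → β)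
    (h : ∀ a, f (g a) = g' (f a)) (l : List α) :
    (l.modifyHead g).map f = (l.map f).modifyHead g' := by
  cases l <;> simp [List.modifyHead, h]

lemma blf_delEnds (x : ℕ) (p q : Finset ℕ) (ls : List (Finset ℕ)) :
    blf x (delEnds p q ls) = dE (decide (x ∈ p)) (decide (x ∈ q)) (blf x ls) := by
  show ((((ls.modifyHead (· \ p)).reverse.modifyHead (· \ q)).reverse).map _) = _
  rw [List.map_reverse, map_modifyHead_comm _ _ (· && !decide (x ∈ q))
    (fun a => decide_mem_sdiff x a q), List.map_reverse,
    map_modifyHead_comm _ _ (· && !decide (x ∈ p)) (fun a => decide_mem_sdiff x a p)]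
  rfl

lemma mem_modifyHead {α : Type*} (g : α → α) (l : List α) (a : α)
    (ha : a ∈ l.modifyHead g) : (∃ b ∈ l, a = g b) ∨ a ∈ l := by
  cases l with
  | nil => simp [List.modifyHead] at ha
  | cons x xs =>
    rcases List.mem_cons.mp ha with h | h
    · exact Or.inl ⟨x, by simp, h⟩
    · exact Or.inr (List.mem_cons_of_mem _ h)

lemma delEnds_mem (p q : Finset ℕ) (ls : List (Finset ℕ)) :
    ∀ l ∈ delEnds p q ls, ∃ l0 ∈ ls, l ⊆ l0 := by
  intro l hl
  rw [delEnds, List.mem_reverse] at hl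
  rcases mem_modifyHead _ _ _ hl with ⟨b, hb, rfl⟩ | hl2
  · rw [List.mem_reverse] at hb
    rcases mem_modifyHead _ _ _ hb with ⟨c, hc, rfl⟩ | hb2
    · exact ⟨c, hc, (Finset.sdiff_subset).trans Finset.sdiff_subset⟩
    · exact ⟨b, hb2, Finset.sdiff_subset⟩
  · rw [List.mem_reverse] at hl2
    rcases mem_modifyHead _ _ _ hl2 with ⟨c, hc, rfl⟩ | hl3
    · exact ⟨c, hc, Finset.sdiff_subset⟩
    · exact ⟨l, hl3, subset_rfl⟩

lemma damZ_decomp (U : Finset ℕ) (ls : List (Finset ℕ)) (p q : Finset ℕ)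
    (hsub : ∀ l ∈ ls, l ⊆ U) :
    damZ ls p q = ∑ x ∈ U, dam1 (decide (x ∈ p)) (decide (x ∈ q)) (blf x ls) := by
  have hsub2 : ∀ l ∈ delEnds p q ls, l ⊆ U := by
    intro l hl
    obtain ⟨l0, hl0, hss⟩ := delEnds_mem p q ls l hl
    exact hss.trans (hsub l0 hl0)
  rw [damZ, SL_decomp U ls hsub, SL_decomp U _ hsub2]
  push_cast
  rw [← Finset.sum_sub_distrib]
  refine Finset.sum_congr rfl fun x _ => ?_
  rw [dam1, blf_delEnds]

def altF : List (Finset ℕ) → ℤ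
  | [] => 0
  | l :: ls => (l.card : ℤ) - altF ls

lemma bT_sum (U : Finset ℕ) : ∀ (ls : List (Finset ℕ)), (∀ l ∈ ls, l ⊆ U) →
    ∑ x ∈ U, (bT (blf x ls) : ℤ) = ((ls.map Finset.card).sum : ℤ) := by
  intro ls
  induction ls with
  | nil => simp
  | cons l ls ih =>
    intro hsub
    have : ∀ x : ℕ, (bT (blf x (l :: ls)) : ℤ)
        = (if x ∈ l then 1 else 0) + (bT (blf x ls) : ℤ) := by
      intro x
      rw [blf_cons, bT_cons]
      by_cases h : x ∈ l <;> simp [h]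
    simp only [this]
    rw [Finset.sum_add_distrib, ih (fun l' hl' => hsub l' (List.mem_cons_of_mem _ hl'))]
    have : ∑ x ∈ U, (if x ∈ l then (1 : ℤ) else 0) = l.card := by
      rw [Finset.sum_ite_mem, Finset.inter_eq_right.mpr (hsub l (by simp))]
      simp
    rw [this, List.map_cons, List.sum_cons]
    push_cast
    ring

lemma bAlt_sum (U : Finset ℕ) : ∀ (ls : List (Finset ℕ)), (∀ l ∈ ls, l ⊆ U) →
    ∑ x ∈ U, bAlt (blf x ls) = altF ls := by
  intro ls
  induction ls with
  | nil => simp [altF]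
  | cons l ls ih =>
    intro hsub
    have : ∀ x : ℕ, bAlt (blf x (l :: ls))
        = (if x ∈ l then 1 else 0) - bAlt (blf x ls) := by
      intro x
      rw [blf_cons, bAlt_cons]
      by_cases h : x ∈ l <;> simp [h]
    simp only [this]
    rw [Finset.sum_sub_distrib, ih (fun l' hl' => hsub l' (List.mem_cons_of_mem _ hl'))]
    have : ∑ x ∈ U, (if x ∈ l then (1 : ℤ) else 0) = l.card := by
      rw [Finset.sum_ite_mem, Finset.inter_eq_right.mpr (hsub l (by simp))]
      simp
    rw [this, altF]

lemma altF_card4 : ∀ (ls : List (Finset ℕ)), (∀ l ∈ ls, l.card = 4) →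
    (Odd ls.length → altF ls = 4) ∧ (Even ls.length → altF ls = 0) := by
  intro ls
  induction ls with
  | nil =>
    intro _
    constructor
    · intro h; simp [Nat.odd_iff] at h
    · intro _; rfl
  | cons l ls ih =>
    intro hc
    have h4 := hc l (by simp)
    have ih' := ih (fun l' hl' => hc l' (List.mem_cons_of_mem _ hl'))
    rw [altF, h4]
    constructor
    · intro h
      have : Even ls.length := by
        rw [List.length_cons, Nat.odd_iff] at h
        rw [Nat.even_iff]; omega
      rw [ih'.2 this]; ring
    · intro h
      have : Odd ls.length := by
        rw [List.length_cons, Nat.even_iff] at h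
        rw [Nat.odd_iff]; omega
      rw [ih'.1 this]; ring

lemma mapsum_card : ∀ (ls : List (Finset ℕ)), (∀ l ∈ ls, l.card = 4) →
    (ls.map Finset.card).sum = 4 * ls.length := by
  intro ls
  induction ls with
  | nil => simp
  | cons l ls ih =>
    intro hc
    rw [List.map_cons, List.sum_cons, hc l (by simp),
      ih (fun l' hl' => hc l' (List.mem_cons_of_mem _ hl')), List.length_cons]
    ring

lemma SLsum_card (U : Finset ℕ) (ls : List (Finset ℕ)) (hsub : ∀ l ∈ ls, l ⊆ U)
    (hc : ∀ l ∈ ls, l.card = 4) :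
    ∑ x ∈ U, (bT (blf x ls) : ℤ) = 4 * ls.length := by
  rw [bT_sum U ls hsub, mapsum_card ls hc]
  push_cast
  ring

set_option maxHeartbeats 1600000 in
lemma countFinal (h0 h1 h2 h3 D : ℤ)
    (b0 : 0 ≤ h0) (b0' : h0 ≤ 2) (b1 : 0 ≤ h1) (b1' : h1 ≤ 2)
    (b2 : 0 ≤ h2) (b2' : h2 ≤ 2) (b3 : 0 ≤ h3) (b3' : h3 ≤ 2)
    (hs : h0 + h1 + h2 + h3 ≤ D + 2) (hD : 2 ≤ D) :
    ((if D < h0 + h1 then 1 else 0) + ((if D < h0 + h2 then 1 else 0)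
      + ((if D < h0 + h3 then 1 else 0) + ((if D < h1 + h2 then 1 else 0)
      + ((if D < h1 + h3 then 1 else 0) + (if D < h2 + h3 then 1 else 0))))) : ℕ) ≤ 2
    ∧ (((if D < h0 + h1 then 1 else 0) + ((if D < h0 + h2 then 1 else 0)
      + ((if D < h0 + h3 then 1 else 0) + ((if D < h1 + h2 then 1 else 0)
      + ((if D < h1 + h3 then 1 else 0) + (if D < h2 + h3 then 1 else 0))))) : ℕ) = 2 →
      D = 2 ∧
      ((if h0 = 2 then 1 else 0) + (if h1 = 2 then 1 else 0)
        + (if h2 = 2 then 1 else 0) + (if h3 = 2 then 1 else 0) : ℕ) = 1 ∧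
      ((if h0 = 1 then 1 else 0) + (if h1 = 1 then 1 else 0)
        + (if h2 = 1 then 1 else 0) + (if h3 = 1 then 1 else 0) : ℕ) = 2) := by
  interval_cases h0 <;> interval_cases h1 <;> interval_cases h2 <;> interval_cases h3 <;>
    norm_num <;> split_ifs <;> omega

lemma decide_and_false {P Q : Prop} [Decidable P] [Decidable Q] (h : P → Q → False) :
    (decide P && decide Q) = false := by
  by_cases hP : P <;> by_cases hQ : Q <;> simp_all

lemma mem_foldr_union : ∀ (ls : List (Finset ℕ)) (l : Finset ℕ), l ∈ ls →
    l ⊆ ls.foldr (· ∪ ·) ∅ := by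
  intro ls
  induction ls with
  | nil => intro l hl; simp at hl
  | cons a as ih =>
    intro l hl
    rcases List.mem_cons.mp hl with rfl | hl'
    · exact Finset.subset_union_left
    · exact (ih l hl').trans Finset.subset_union_right

theorem core (ls : List (Finset ℕ)) (hodd : Odd ls.length)
    (hcard : ∀ l ∈ ls, l.card = 4)
    (Lu Lv : Finset ℕ) (c c' : Fin 4 → ℕ)
    (hcinj : Function.Injective c) (hc'inj : Function.Injective c')
    (hcu : Finset.image c Finset.univ = Lu) (hc'v : Finset.image c' Finset.univ = Lv)
    (hmatch : ∀ j, c j ∈ Lu ∩ Lv → c' j = c j) :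
    ((Finset.powersetCard 2 (Finset.univ : Finset (Fin 4))).filter
      fun s => (SL ls : ℤ) - 2 * ls.length < damZ ls (s.image c) (s.image c')).card ≤ 2 ∧
    (((Finset.powersetCard 2 (Finset.univ : Finset (Fin 4))).filter
      fun s => (SL ls : ℤ) - 2 * ls.length < damZ ls (s.image c) (s.image c')).card = 2 →
      SL ls = 2 * ls.length + 2 ∧
      (Finset.univ.filter fun j : Fin 4 => damZ ls {c j} {c' j} = 2).card = 1 ∧
      (Finset.univ.filter fun j : Fin 4 => damZ ls {c j} {c' j} = 1).card = 2) := by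
  classical
  set U : Finset ℕ := ls.foldr (· ∪ ·) ∅ ∪ Lu ∪ Lv with hU
  have hsub : ∀ l ∈ ls, l ⊆ U := fun l hl =>
    (mem_foldr_union ls l hl).trans
      (Finset.subset_union_left.trans Finset.subset_union_left)
  have hcju : ∀ j, c j ∈ Lu := fun j => hcu ▸ Finset.mem_image_of_mem c (Finset.mem_univ j)
  have hc'jv : ∀ j, c' j ∈ Lv := fun j => hc'v ▸ Finset.mem_image_of_mem c' (Finset.mem_univ j)
  have hcjU : ∀ j, c j ∈ U := fun j => by
    simp only [hU, Finset.mem_union]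
    exact Or.inl (Or.inr (hcju j))
  have hc'jU : ∀ j, c' j ∈ U := fun j => by
    simp only [hU, Finset.mem_union]
    exact Or.inr (hc'jv j)
  -- matching colours have matching indices
  have hkey : ∀ j k, c j = c' k → j = k := by
    intro j k h
    have h1 : c j ∈ Lu ∩ Lv := Finset.mem_inter.mpr ⟨hcju j, h ▸ hc'jv k⟩
    have h2 := hmatch j h1
    exact hc'inj (h2.trans h)
  have hoddb : ∀ x : ℕ, Odd (blf x ls).length := fun x => by simpa using hodd
  -- decomposition of the couple damages
  have hjd : ∀ j, damZ ls {c j} {c' j}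
      = ∑ x ∈ U, dam1 (decide (x = c j)) (decide (x = c' j)) (blf x ls) := by
    intro j
    rw [damZ_decomp U ls _ _ hsub]
    refine Finset.sum_congr rfl fun x _ => ?_
    congr 1 <;> simp [Finset.mem_singleton]
  -- bounds on couple damages
  have hnn : ∀ j, 0 ≤ damZ ls {c j} {c' j} := fun j => by
    rw [hjd j]
    exact Finset.sum_nonneg fun x _ => dam1_nonneg _ _ _
  have hub : ∀ j, damZ ls {c j} {c' j} ≤ 2 := by
    intro j
    rw [hjd j]
    have step1 : ∑ x ∈ U, dam1 (decide (x = c j)) (decide (x = c' j)) (blf x ls)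
        ≤ ∑ x ∈ U, ((if x = c j then 1 else 0) + (if x = c' j then 1 else 0) : ℤ) := by
      refine Finset.sum_le_sum fun x _ => ?_
      have := dam1_le (decide (x = c j)) (decide (x = c' j)) (blf x ls)
      by_cases h1 : x = c j <;> by_cases h2 : x = c' j <;> simp_all
    have step2 : ∑ x ∈ U, ((if x = c j then 1 else 0) + (if x = c' j then 1 else 0) : ℤ) ≤ 2 := by
      rw [Finset.sum_add_distrib]
      have e1 : ∑ x ∈ U, (if x = c j then (1:ℤ) else 0) ≤ 1 := by
        rw [Finset.sum_ite_eq' U (c j) (fun _ => (1:ℤ))]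
        split <;> omega
      have e2 : ∑ x ∈ U, (if x = c' j then (1:ℤ) else 0) ≤ 1 := by
        rw [Finset.sum_ite_eq' U (c' j) (fun _ => (1:ℤ))]
        split <;> omega
      omega
    exact step1.trans step2
  -- global sums
  have hSL : (SL ls : ℤ) = ∑ x ∈ U, (bN (blf x ls) : ℤ) := by
    rw [SL_decomp U ls hsub]
    push_cast
    rfl
  have hT := SLsum_card U ls hsub hcard
  have hAlt : ∑ x ∈ U, bAlt (blf x ls) = 4 := by
    rw [bAlt_sum U ls hsub]
    exact (altF_card4 ls hcard).1 hodd
  -- D ≥ 2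
  have hD : 2 ≤ (SL ls : ℤ) - 2 * ls.length := by
    have h1 : ∀ x ∈ U, (bT (blf x ls) : ℤ) + bAlt (blf x ls) ≤ 2 * bN (blf x ls) :=
      fun x _ => (E8 _).1
    have h2 := Finset.sum_le_sum h1
    rw [Finset.sum_add_distrib] at h2
    have h3 : ∑ x ∈ U, (2 * bN (blf x ls) : ℤ) = 2 * ∑ x ∈ U, (bN (blf x ls) : ℤ) := by
      rw [Finset.mul_sum]
    rw [h3, hT, hAlt] at h2
    omega
  -- sum of couple damages ≤ D + 2
  have hsum4 : damZ ls {c 0} {c' 0} + damZ ls {c 1} {c' 1} + damZ ls {c 2} {c' 2}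
      + damZ ls {c 3} {c' 3} ≤ ((SL ls : ℤ) - 2 * ls.length) + 2 := by
    have key : 2 * (damZ ls {c 0} {c' 0} + damZ ls {c 1} {c' 1} + damZ ls {c 2} {c' 2}
        + damZ ls {c 3} {c' 3}) ≤ 2 * (SL ls : ℤ) - 4 * ls.length + 4 := by
      rw [hjd 0, hjd 1, hjd 2, hjd 3, ← Finset.sum_add_distrib, ← Finset.sum_add_distrib,
        ← Finset.sum_add_distrib]
      have hb : ∀ x ∈ U, 2 * (dam1 (decide (x = c 0)) (decide (x = c' 0)) (blf x ls)
          + dam1 (decide (x = c 1)) (decide (x = c' 1)) (blf x ls)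
          + dam1 (decide (x = c 2)) (decide (x = c' 2)) (blf x ls)
          + dam1 (decide (x = c 3)) (decide (x = c' 3)) (blf x ls))
          ≤ 2 * (bN (blf x ls) : ℤ) - bT (blf x ls) + bAlt (blf x ls) := by
        intro x _
        have := quadBound (blf x ls) (hoddb x)
          (fun i => decide (x = c i)) (fun i => decide (x = c' i))
          (fun i j hi hj => hcinj ((of_decide_eq_true hi).symm.trans (of_decide_eq_true hj)))
          (fun i j hi hj => hc'inj ((of_decide_eq_true hi).symm.trans (of_decide_eq_true hj)))
          (fun i j hi hj => hkey i j ((of_decide_eq_true hi).symm.trans (of_decide_eq_true hj)))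
        -- reassociate
        calc 2 * (dam1 (decide (x = c 0)) (decide (x = c' 0)) (blf x ls)
              + dam1 (decide (x = c 1)) (decide (x = c' 1)) (blf x ls)
              + dam1 (decide (x = c 2)) (decide (x = c' 2)) (blf x ls)
              + dam1 (decide (x = c 3)) (decide (x = c' 3)) (blf x ls))
            = 2 * (dam1 (decide (x = c 0)) (decide (x = c' 0)) (blf x ls)
              + dam1 (decide (x = c 1)) (decide (x = c' 1)) (blf x ls)
              + dam1 (decide (x = c 2)) (decide (x = c' 2)) (blf x ls)
              + dam1 (decide (x = c 3)) (decide (x = c' 3)) (blf x ls)) := rfl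
          _ ≤ _ := this
      have h2 := Finset.sum_le_sum hb
      calc 2 * ∑ x ∈ U, (dam1 (decide (x = c 0)) (decide (x = c' 0)) (blf x ls)
            + dam1 (decide (x = c 1)) (decide (x = c' 1)) (blf x ls)
            + dam1 (decide (x = c 2)) (decide (x = c' 2)) (blf x ls)
            + dam1 (decide (x = c 3)) (decide (x = c' 3)) (blf x ls))
          = ∑ x ∈ U, 2 * (dam1 (decide (x = c 0)) (decide (x = c' 0)) (blf x ls)
            + dam1 (decide (x = c 1)) (decide (x = c' 1)) (blf x ls)
            + dam1 (decide (x = c 2)) (decide (x = c' 2)) (blf x ls)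
            + dam1 (decide (x = c 3)) (decide (x = c' 3)) (blf x ls)) := Finset.mul_sum _ _ _
        _ ≤ ∑ x ∈ U, (2 * (bN (blf x ls) : ℤ) - bT (blf x ls) + bAlt (blf x ls)) := h2
        _ = 2 * (SL ls : ℤ) - 4 * ls.length + 4 := by
            rw [Finset.sum_add_distrib, Finset.sum_sub_distrib, hT, hAlt, hSL,
              Finset.mul_sum]
    omega
  -- pair damages split into couple damages
  have hpair : ∀ a b : Fin 4, a ≠ b →
      damZ ls {c a, c b} {c' a, c' b} = damZ ls {c a} {c' a} + damZ ls {c b} {c' b} := by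
    intro a b hab
    rw [damZ_decomp U ls _ _ hsub, hjd a, hjd b, ← Finset.sum_add_distrib]
    refine Finset.sum_congr rfl fun x _ => ?_
    have e1 : decide (x ∈ ({c a, c b} : Finset ℕ)) = (decide (x = c a) || decide (x = c b)) := by
      by_cases h1 : x = c a <;> by_cases h2 : x = c b <;>
        simp [Finset.mem_insert, Finset.mem_singleton, h1, h2]
    have e2 : decide (x ∈ ({c' a, c' b} : Finset ℕ))
        = (decide (x = c' a) || decide (x = c' b)) := by
      by_cases h1 : x = c' a <;> by_cases h2 : x = c' b <;>
        simp [Finset.mem_insert, Finset.mem_singleton, h1, h2]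
    rw [e1, e2]
    refine dam1_split _ _ _ _ _ ?_ ?_ ?_ ?_
    · apply decide_and_false
      intro h1 h2
      exact hab (hcinj (h1.symm.trans h2))
    · apply decide_and_false
      intro h1 h2
      exact hab (hc'inj (h1.symm.trans h2))
    · apply decide_and_false
      intro h1 h2
      exact hab (hkey a b (h1.symm.trans h2))
    · apply decide_and_false
      intro h1 h2
      exact hab (hkey b a (h1.symm.trans h2)).symm
  -- evaluate the six simple pairs
  have hpow : Finset.powersetCard 2 (Finset.univ : Finset (Fin 4))
      = {{0,1},{0,2},{0,3},{1,2},{1,3},{2,3}} := by decide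
  have himg : ∀ (f : Fin 4 → ℕ) (a b : Fin 4),
      ({a, b} : Finset (Fin 4)).image f = {f a, f b} := by
    intro f a b; simp [Finset.image_insert]
  have hbc : ((Finset.powersetCard 2 (Finset.univ : Finset (Fin 4))).filter
      fun s => (SL ls : ℤ) - 2 * ls.length < damZ ls (s.image c) (s.image c')).card
      = (if (SL ls : ℤ) - 2 * ls.length < damZ ls {c 0} {c' 0} + damZ ls {c 1} {c' 1}
          then 1 else 0)
      + ((if (SL ls : ℤ) - 2 * ls.length < damZ ls {c 0} {c' 0} + damZ ls {c 2} {c' 2}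
          then 1 else 0)
      + ((if (SL ls : ℤ) - 2 * ls.length < damZ ls {c 0} {c' 0} + damZ ls {c 3} {c' 3}
          then 1 else 0)
      + ((if (SL ls : ℤ) - 2 * ls.length < damZ ls {c 1} {c' 1} + damZ ls {c 2} {c' 2}
          then 1 else 0)
      + ((if (SL ls : ℤ) - 2 * ls.length < damZ ls {c 1} {c' 1} + damZ ls {c 3} {c' 3}
          then 1 else 0)
      + (if (SL ls : ℤ) - 2 * ls.length < damZ ls {c 2} {c' 2} + damZ ls {c 3} {c' 3}
          then 1 else 0))))) := by
    rw [hpow, Finset.card_filter]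
    rw [Finset.sum_insert (by decide), Finset.sum_insert (by decide),
      Finset.sum_insert (by decide), Finset.sum_insert (by decide),
      Finset.sum_insert (by decide), Finset.sum_singleton]
    rw [himg c 0 1, himg c' 0 1, himg c 0 2, himg c' 0 2, himg c 0 3, himg c' 0 3,
      himg c 1 2, himg c' 1 2, himg c 1 3, himg c' 1 3, himg c 2 3, himg c' 2 3]
    rw [hpair 0 1 (by decide), hpair 0 2 (by decide), hpair 0 3 (by decide),
      hpair 1 2 (by decide), hpair 1 3 (by decide), hpair 2 3 (by decide)]
  have hh : (Finset.univ.filter fun j : Fin 4 => damZ ls {c j} {c' j} = 2).card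
      = (if damZ ls {c 0} {c' 0} = 2 then 1 else 0) + (if damZ ls {c 1} {c' 1} = 2 then 1 else 0)
      + (if damZ ls {c 2} {c' 2} = 2 then 1 else 0)
      + (if damZ ls {c 3} {c' 3} = 2 then 1 else 0) := by
    rw [Finset.card_filter, Fin.sum_univ_four]
  have hl : (Finset.univ.filter fun j : Fin 4 => damZ ls {c j} {c' j} = 1).card
      = (if damZ ls {c 0} {c' 0} = 1 then 1 else 0) + (if damZ ls {c 1} {c' 1} = 1 then 1 else 0)
      + (if damZ ls {c 2} {c' 2} = 1 then 1 else 0)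
      + (if damZ ls {c 3} {c' 3} = 1 then 1 else 0) := by
    rw [Finset.card_filter, Fin.sum_univ_four]
  obtain ⟨C1, C2⟩ := countFinal (damZ ls {c 0} {c' 0}) (damZ ls {c 1} {c' 1})
    (damZ ls {c 2} {c' 2}) (damZ ls {c 3} {c' 3}) ((SL ls : ℤ) - 2 * ls.length)
    (hnn 0) (hub 0) (hnn 1) (hub 1) (hnn 2) (hub 2) (hnn 3) (hub 3) hsum4 hD
  constructor
  · rw [hbc]; exact C1
  · intro h2
    rw [hbc] at h2
    obtain ⟨hDeq, hHeavy, hLight⟩ := C2 h2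
    have hlen : (ls.length : ℤ) = ls.length := rfl
    refine ⟨by omega, ?_, ?_⟩
    · rw [hh]; exact hHeavy
    · rw [hl]; exact hLight

/-- Lemma `lem:intblock`: let `G` be a generalized theta graph consisting of two vertices
`u ≠ v` joined by at least three internally vertex-disjoint paths `P i`, covering all
vertices and edges of `G`, in which every internal path (component of `G − {u,v}`,
i.e. the interior of any `P i` of length ≥ 2) has an odd number of vertices. Let `L`
assign 4 colours to every vertex, with `L u = {c 0, c 1, c 2, c 3}` and
`L v = {c' 0, c' 1, c' 2, c' 3}` indexed so that `c' j = c j` whenever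
`c j ∈ L u ∩ L v`. Then every internal path blocks at most 2 of the six simple pairs,
and if it blocks exactly 2 of them, then `S_L(P) = 2|V(P)| + 2` and `P` has exactly one
heavy couple and exactly two light couples. -/
theorem internal_path_blocks_at_most_two
    (V : Type) (G : SimpleGraph V) (u v : V) (huv : u ≠ v)
    (ι : Type) [Fintype ι] (hι : 3 ≤ Fintype.card ι)
    (P : ι → G.Walk u v) (hpath : ∀ i, (P i).IsPath)
    (hint : ∀ i j, i ≠ j → ∀ x, x ∈ (P i).support → x ∈ (P j).support →
      x = u ∨ x = v)
    (hcover : ∀ x : V, ∃ i, x ∈ (P i).support)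
    (hecover : ∀ e ∈ G.edgeSet, ∃ i, e ∈ (P i).edges)
    (hoddint : ∀ i, 2 ≤ (P i).length → Odd ((P i).length - 1))
    (L : V → Finset ℕ) (hL : ∀ x, (L x).card = 4)
    (c c' : Fin 4 → ℕ)
    (hcinj : Function.Injective c) (hc'inj : Function.Injective c')
    (hcu : Finset.image c Finset.univ = L u)
    (hc'v : Finset.image c' Finset.univ = L v)
    (hmatch : ∀ j, c j ∈ L u ∩ L v → c' j = c j) :
    ∀ i, 2 ≤ (P i).length →
      -- the lists along the internal path of `P i` (its interior, in order)
      let ls := ((P i).support.tail.dropLast).map L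
      -- the simple pairs blocked by this internal path
      let blocked := (Finset.powersetCard 2 (Finset.univ : Finset (Fin 4))).filter
        fun s => (SL ls : ℤ) - 2 * ls.length < damZ ls (s.image c) (s.image c')
      blocked.card ≤ 2 ∧
        (blocked.card = 2 →
          SL ls = 2 * ls.length + 2 ∧
          (Finset.univ.filter fun j : Fin 4 => damZ ls {c j} {c' j} = 2).card = 1 ∧
          (Finset.univ.filter fun j : Fin 4 => damZ ls {c j} {c' j} = 1).card = 2) := by
  intro i hi ls blocked
  have hlen : ls.length = (P i).length - 1 := by
    show (((P i).support.tail.dropLast).map L).length = _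
    rw [List.length_map, List.length_dropLast, List.length_tail,
      SimpleGraph.Walk.length_support]
    omega
  have hodd : Odd ls.length := by rw [hlen]; exact hoddint i hi
  have hcard : ∀ l ∈ ls, l.card = 4 := by
    intro l hl
    obtain ⟨x, _, rfl⟩ := List.mem_map.mp hl
    exact hL x
  exact core ls hodd hcard (L u) (L v) c c' hcinj hc'inj hcu hc'v hmatch
end

section
/- Let P be a path with an odd number of vertices, let L be a list assignment on P with |L(x)| = 4 for every vertex x, and let W be a set of 4 colours. Then at most two of the six 2-element subsets p of W satisfy dam_{L,P}(p, p) > S_L(P) − 2|V(P)| (i.e., P has at most 2 bad W-sets). -/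
-- ### basic Xseq facts

lemma Xseq_length (prev : Finset ℕ) (l : List (Finset ℕ)) :
    (Xseq prev l).length = l.length := by
  induction l generalizing prev with
  | nil => rfl
  | cons a t ih => simp [Xseq, ih]

lemma Xseq_getD_zero (prev : Finset ℕ) (l : List (Finset ℕ)) :
    (Xseq prev l).getD 0 ∅ = l.getD 0 ∅ \ prev := by
  cases l with
  | nil => simp [Xseq]
  | cons a t => simp [Xseq]

lemma Xseq_getD_succ (prev : Finset ℕ) (l : List (Finset ℕ)) (i : ℕ)
    (h : i + 1 < l.length) :
    (Xseq prev l).getD (i+1) ∅ = l.getD (i+1) ∅ \ (Xseq prev l).getD i ∅ := by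
  induction l generalizing prev i with
  | nil => simp at h
  | cons a t ih =>
    cases i with
    | zero =>
      simp only [Xseq, List.getD_cons_succ, List.getD_cons_zero]
      rw [Xseq_getD_zero]
    | succ j =>
      simp only [Xseq, List.getD_cons_succ]
      exact ih _ j (by simpa using h)

lemma Xat_zero (ls : List (Finset ℕ)) : Xat ls 0 = ls.getD 0 ∅ := by
  rw [Xat, Xseq_getD_zero]; simp

lemma Xat_succ (ls : List (Finset ℕ)) (i : ℕ) (h : i + 1 < ls.length) :
    Xat ls (i+1) = ls.getD (i+1) ∅ \ Xat ls i :=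
  Xseq_getD_succ ∅ ls i h

lemma Xat_subset (ls : List (Finset ℕ)) (i : ℕ) (h : i < ls.length) :
    Xat ls i ⊆ ls.getD i ∅ := by
  cases i with
  | zero => rw [Xat_zero]
  | succ j => rw [Xat_succ _ _ h]; exact Finset.sdiff_subset

lemma SL_eq_sum (ls : List (Finset ℕ)) :
    SL ls = ∑ i ∈ Finset.range ls.length, (Xat ls i).card := by
  rw [SL]
  have : ∀ (l : List (Finset ℕ)),
      ((l.map Finset.card).sum) = ∑ i ∈ Finset.range l.length, (l.getD i ∅).card := by
    intro l
    induction l with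
    | nil => simp
    | cons a t ih =>
      rw [List.map_cons, List.sum_cons, ih, List.length_cons,
        Finset.sum_range_succ']
      simp only [List.getD_cons_succ, List.getD_cons_zero]
      exact add_comm _ _
  rw [this, Xseq_length]
  exact Finset.sum_congr rfl fun i _ => rfl

-- ### Aset membership

lemma mem_foldl_inter (c : ℕ) (t : List (Finset ℕ)) (a : Finset ℕ) :
    c ∈ t.foldl (· ∩ ·) a ↔ c ∈ a ∧ ∀ x ∈ t, c ∈ x := by
  induction t generalizing a with
  | nil => simp
  | cons b r ih =>
    rw [List.foldl_cons, ih]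
    simp only [Finset.mem_inter, List.mem_cons]
    constructor
    · rintro ⟨⟨h1, h2⟩, h3⟩
      exact ⟨h1, fun x hx => by rcases hx with rfl | hx; exact h2; exact h3 x hx⟩
    · rintro ⟨h1, h2⟩
      exact ⟨⟨h1, h2 b (Or.inl rfl)⟩, fun x hx => h2 x (Or.inr hx)⟩

lemma mem_Aset (ls : List (Finset ℕ)) (c : ℕ) (h : ls ≠ []) :
    c ∈ Aset ls ↔ ∀ i < ls.length, c ∈ ls.getD i ∅ := by
  cases ls with
  | nil => exact absurd rfl h
  | cons a t =>
    rw [Aset, mem_foldl_inter]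
    constructor
    · rintro ⟨h1, h2⟩ i hi
      cases i with
      | zero => simpa using h1
      | succ j =>
        simp only [List.getD_cons_succ]
        have hj : j < t.length := by simpa using hi
        exact h2 _ (by rw [List.getD_eq_getElem _ _ hj]; exact List.getElem_mem hj)
    · intro h1
      refine ⟨by simpa using h1 0 (by simp), fun x hx => ?_⟩
      obtain ⟨j, hj, rfl⟩ := List.mem_iff_getElem.1 hx
      have := h1 (j+1) (by simpa using hj)
      rw [List.getD_cons_succ, List.getD_eq_getElem _ _ hj] at this
      exact this

-- ### firstMissing facts

lemma firstMissing_spec (ls : List (Finset ℕ)) (c : ℕ) (h : ls ≠ [])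
    (hc : c ∉ Aset ls) :
    firstMissing ls c < ls.length ∧ c ∉ ls.getD (firstMissing ls c) ∅ ∧
      ∀ j < firstMissing ls c, j < ls.length → c ∈ ls.getD j ∅ := by
  have hne : {i | i < ls.length ∧ c ∉ ls.getD i ∅}.Nonempty := by
    rw [mem_Aset ls c h] at hc
    push_neg at hc
    obtain ⟨i, hi, hci⟩ := hc
    exact ⟨i, hi, hci⟩
  have hmem := Nat.sInf_mem hne
  refine ⟨hmem.1, hmem.2, fun j hj hjl => ?_⟩
  by_contra hcj
  exact absurd ⟨hjl, hcj⟩ (Nat.notMem_of_lt_sInf hj)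

-- ### parity of positions

lemma even_pos (ls : List (Finset ℕ)) (c : ℕ) (i : ℕ) (h : i < ls.length)
    (hc : ∀ j ≤ i, c ∈ ls.getD j ∅) :
    (Even i → c ∈ Xat ls i) ∧ (Odd i → c ∉ Xat ls i) := by
  induction i with
  | zero =>
    refine ⟨fun _ => ?_, fun ho => by simp at ho⟩
    rw [Xat_zero]; exact hc 0 le_rfl
  | succ j ih =>
    have hj : j < ls.length := by omega
    have ihj := ih hj (fun k hk => hc k (by omega))
    rw [Xat_succ _ _ h]
    constructor
    · intro he
      have hoj : Odd j := Nat.not_even_iff_odd.1 (Nat.even_add_one.1 he)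
      exact Finset.mem_sdiff.2 ⟨hc (j+1) le_rfl, ihj.2 hoj⟩
    · intro ho hmem
      exact (Finset.mem_sdiff.1 hmem).2 (ihj.1 (Nat.not_odd_iff_even.1 (Nat.odd_add_one.1 ho)))

-- ### delEnds

lemma getD_reverse (l : List (Finset ℕ)) (i : ℕ) (h : i < l.length) :
    l.reverse.getD i ∅ = l.getD (l.length - 1 - i) ∅ := by
  rw [List.getD_eq_getElem _ _ (by simpa using h),
    List.getD_eq_getElem _ _ (by omega), List.getElem_reverse]

lemma getD_modifyHead (f : Finset ℕ → Finset ℕ) (l : List (Finset ℕ)) (i : ℕ)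
    (h : i < l.length) :
    (l.modifyHead f).getD i ∅ = if i = 0 then f (l.getD 0 ∅) else l.getD i ∅ := by
  cases l with
  | nil => simp at h
  | cons a t =>
    cases i with
    | zero => simp
    | succ j => simp

lemma delEnds_length (p q : Finset ℕ) (l : List (Finset ℕ)) :
    (delEnds p q l).length = l.length := by
  simp [delEnds]

lemma delEnds_getD (p q : Finset ℕ) (l : List (Finset ℕ)) (i : ℕ)
    (h : i < l.length) :
    (delEnds p q l).getD i ∅ =
      (if i = l.length - 1
        then (if i = 0 then l.getD i ∅ \ p else l.getD i ∅) \ q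
        else if i = 0 then l.getD i ∅ \ p else l.getD i ∅) := by
  have h1 : (l.modifyHead (· \ p)).length = l.length := List.length_modifyHead
  have h2 : ((l.modifyHead (· \ p)).reverse.modifyHead (· \ q)).length = l.length := by
    simp
  rw [delEnds, getD_reverse _ _ (by simpa using h), h2,
    getD_modifyHead _ _ _ (by simp [h1]; omega)]
  by_cases hl : i = l.length - 1
  · rw [if_pos (by omega : l.length - 1 - i = 0), if_pos hl,
      getD_reverse _ _ (by simp [h1]; omega), h1, Nat.sub_zero,
      getD_modifyHead _ _ _ (by omega)]
    by_cases h0 : l.length - 1 = 0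
    · rw [if_pos h0, if_pos (by omega : i = 0), (by omega : i = 0)]
    · rw [if_neg h0, if_neg (by omega : ¬ i = 0), hl]
  · have hne : l.length - 1 - i ≠ 0 := by omega
    rw [if_neg hne, if_neg hl, getD_reverse _ _ (by simp [h1]; omega), h1,
      (by omega : l.length - 1 - (l.length - 1 - i) = i),
      getD_modifyHead _ _ _ h]
    by_cases h0 : i = 0
    · subst h0; simp
    · rw [if_neg h0, if_neg h0]

-- ### lower bounds on SL

lemma S_lower1 (ls : List (Finset ℕ)) (m : ℕ) (hm : ls.length = 2*m + 1)
    (hcard : ∀ i, i < ls.length → (ls.getD i ∅).card = 4) :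
    2 * ls.length + 2 ≤ SL ls := by
  have key : ∀ k, 2*k < ls.length →
      4 + 4*k ≤ ∑ i ∈ Finset.range (2*k+1), (Xat ls i).card := by
    intro k
    induction k with
    | zero =>
      intro _
      rw [Finset.sum_range_one, Xat_zero, hcard 0 (by omega)]
    | succ j ih =>
      intro hk
      have h1 : 2*j + 2 < ls.length := by omega
      have h2 : 2*j + 1 < ls.length := by omega
      have e1 : 2*(j+1)+1 = (2*j+1) + 1 + 1 := by ring
      rw [e1, Finset.sum_range_succ, Finset.sum_range_succ]
      have hpair : 4 ≤ (Xat ls (2*j+1)).card + (Xat ls (2*j+1+1)).card := by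
        have : Xat ls (2*j+1+1) = ls.getD (2*j+1+1) ∅ \ Xat ls (2*j+1) :=
          Xat_succ ls _ (by omega)
        rw [this]
        calc 4 = (ls.getD (2*j+1+1) ∅).card := (hcard _ (by omega)).symm
        _ ≤ (ls.getD (2*j+1+1) ∅ \ Xat ls (2*j+1)).card + (Xat ls (2*j+1)).card :=
          Finset.card_le_card_sdiff_add_card
        _ = (Xat ls (2*j+1)).card + (ls.getD (2*j+1+1) ∅ \ Xat ls (2*j+1)).card :=
          add_comm _ _
      have := ih (by omega)
      have hpair' : 4 ≤ (Xat ls (2*j+1)).card + (Xat ls (2*j+2)).card := by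
        rwa [show 2*j+1+1 = 2*j+2 by omega] at hpair
      omega
  have := key m (by omega)
  rw [SL_eq_sum, hm]
  omega

lemma Aset_subset_Xat (ls : List (Finset ℕ)) (i : ℕ) (h : i < ls.length)
    (he : Even i) : Aset ls ⊆ Xat ls i := by
  intro c hc
  have hne : ls ≠ [] := by intro hh; rw [hh] at h; simp at h
  have hmem := (mem_Aset ls c hne).1 hc
  exact (even_pos ls c i h (fun j hj => hmem j (by omega))).1 he

lemma hatX1_mem_X (ls : List (Finset ℕ)) (c : ℕ) (hc : c ∈ hatX1 ls)
    (hne : ls ≠ []) :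
    firstMissing ls c < ls.length ∧ c ∉ ls.getD (firstMissing ls c) ∅ ∧
      (∀ k, 2*k + 1 = firstMissing ls c → c ∈ Xat ls (2*k)) := by
  rw [hatX1, Finset.mem_filter, Finset.mem_sdiff] at hc
  obtain ⟨⟨hc0, hcA⟩, hodd⟩ := hc
  obtain ⟨hlt, hnotin, hall⟩ := firstMissing_spec ls c hne hcA
  refine ⟨hlt, hnotin, fun k hk => ?_⟩
  have h2k : 2*k < ls.length := by omega
  exact (even_pos ls c (2*k) h2k (fun j hj => hall j (by omega) (by omega))).1
    (even_two_mul k)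

lemma S_lower2 (ls : List (Finset ℕ)) (m : ℕ) (hm : ls.length = 2*m + 1)
    (hcard : ∀ i, i < ls.length → (ls.getD i ∅).card = 4) :
    4*m + (hatX1 ls).card + (Aset ls).card + (hatXn ls).card ≤ SL ls := by
  classical
  have hne : ls ≠ [] := by intro hh; rw [hh] at hm; simp at hm
  -- the final term
  have hA : Aset ls ⊆ Xat ls (2*m) :=
    Aset_subset_Xat ls (2*m) (by omega) (even_two_mul m)
  have hAle := Finset.card_le_card hA
  have hidx : ls.length - 1 = 2*m := by omega
  have hsd : (hatXn ls).card = (Xat ls (2*m)).card - (Aset ls).card := by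
    rw [hatXn, hidx, Finset.card_sdiff_of_subset hA]
  -- pair sums
  have hpair : ∀ j, 2*j+1 < ls.length →
      (Xat ls (2*j)).card + (Xat ls (2*j+1)).card
        = 4 + (Xat ls (2*j) \ ls.getD (2*j+1) ∅).card := by
    intro j hj
    have hX : Xat ls (2*j+1) = ls.getD (2*j+1) ∅ \ Xat ls (2*j) :=
      Xat_succ ls _ hj
    have e1 := Finset.card_sdiff_add_card_inter (ls.getD (2*j+1) ∅) (Xat ls (2*j))
    have e2 := Finset.card_sdiff_add_card_inter (Xat ls (2*j)) (ls.getD (2*j+1) ∅)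
    have e3 : (ls.getD (2*j+1) ∅ ∩ Xat ls (2*j)).card
        = (Xat ls (2*j) ∩ ls.getD (2*j+1) ∅).card := by rw [Finset.inter_comm]
    have e4 := hcard (2*j+1) hj
    rw [hX]
    omega
  -- partial sums
  have key : ∀ k, 2*k ≤ 2*m →
      4*k + ∑ j ∈ Finset.range k, (Xat ls (2*j) \ ls.getD (2*j+1) ∅).card
        ≤ ∑ i ∈ Finset.range (2*k), (Xat ls i).card := by
    intro k
    induction k with
    | zero => intro _; simp
    | succ j ih =>
      intro hk
      have e1 : 2*(j+1) = (2*j) + 1 + 1 := by ring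
      rw [e1, Finset.sum_range_succ, Finset.sum_range_succ, Finset.sum_range_succ]
      have := ih (by omega)
      have := hpair j (by omega)
      omega
  -- hatX1 counted inside the pair excesses
  have hsub : ∀ j ∈ Finset.range m,
      ((hatX1 ls).filter (fun c => firstMissing ls c = 2*j+1)).card
        ≤ (Xat ls (2*j) \ ls.getD (2*j+1) ∅).card := by
    intro j _
    apply Finset.card_le_card
    intro c hc
    rw [Finset.mem_filter] at hc
    obtain ⟨hmem, hfm⟩ := hc
    obtain ⟨hlt, hnotin, hX⟩ := hatX1_mem_X ls c hmem hne
    rw [Finset.mem_sdiff]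
    exact ⟨hX j hfm.symm, by rw [← hfm]; exact hnotin⟩
  have hcover : (hatX1 ls).card =
      ∑ j ∈ Finset.range m,
        ((hatX1 ls).filter (fun c => firstMissing ls c = 2*j+1)).card := by
    rw [← Finset.card_biUnion]
    · congr 1
      apply Finset.ext
      intro c
      simp only [Finset.mem_biUnion, Finset.mem_filter, Finset.mem_range]
      constructor
      · intro hc
        have hodd : Odd (firstMissing ls c) := by
          rw [hatX1, Finset.mem_filter] at hc; exact hc.2
        have hcA : c ∉ Aset ls := by
          rw [hatX1, Finset.mem_filter, Finset.mem_sdiff] at hc; exact hc.1.2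
        obtain ⟨hlt, _, _⟩ := firstMissing_spec ls c hne hcA
        obtain ⟨t, ht⟩ := hodd
        exact ⟨t, by omega, hc, by omega⟩
      · rintro ⟨t, _, hc, _⟩; exact hc
    · intro x _ y _ hxy
      simp only [Finset.disjoint_left, Finset.mem_filter]
      rintro c ⟨_, h1⟩ ⟨_, h2⟩
      omega
  have hmain := key m le_rfl
  have hSL : SL ls = ∑ i ∈ Finset.range (2*m), (Xat ls i).card + (Xat ls (2*m)).card := by
    rw [SL_eq_sum, hm, Finset.sum_range_succ]
  have hsum_le : (hatX1 ls).card ≤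
      ∑ j ∈ Finset.range m, (Xat ls (2*j) \ ls.getD (2*j+1) ∅).card := by
    rw [hcover]; exact Finset.sum_le_sum hsub
  omega

-- ### the master computation for delEnds p p

open Classical in
noncomputable def ddf (ls : List (Finset ℕ)) (p : Finset ℕ) (i : ℕ) : Finset ℕ :=
  p.filter (fun c => ∀ j ≤ i, c ∈ ls.getD j ∅)

lemma ddf_sub_p (ls : List (Finset ℕ)) (p : Finset ℕ) (i : ℕ) :
    ddf ls p i ⊆ p := Finset.filter_subset _ _

lemma mem_ddf (ls : List (Finset ℕ)) (p : Finset ℕ) (i : ℕ) (c : ℕ) :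
    c ∈ ddf ls p i ↔ c ∈ p ∧ ∀ j ≤ i, c ∈ ls.getD j ∅ := by
  simp [ddf]

lemma ddf_sub_X (ls : List (Finset ℕ)) (p : Finset ℕ) (i : ℕ) (h : i < ls.length)
    (he : Even i) : ddf ls p i ⊆ Xat ls i := by
  intro c hc
  rw [mem_ddf] at hc
  exact (even_pos ls c i h hc.2).1 he

lemma ddf_disj_X (ls : List (Finset ℕ)) (p : Finset ℕ) (i : ℕ) (h : i < ls.length)
    (ho : Odd i) : Disjoint (Xat ls i) (ddf ls p i) := by
  rw [Finset.disjoint_right]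
  intro c hc
  rw [mem_ddf] at hc
  exact (even_pos ls c i h hc.2).2 ho

lemma ddf_succ (ls : List (Finset ℕ)) (p : Finset ℕ) (i : ℕ) :
    ddf ls p (i+1) = ddf ls p i ∩ ls.getD (i+1) ∅ := by
  ext c
  simp only [mem_ddf, Finset.mem_inter]
  constructor
  · rintro ⟨hp, hall⟩
    exact ⟨⟨hp, fun j hj => hall j (by omega)⟩, hall (i+1) le_rfl⟩
  · rintro ⟨⟨hp, hall⟩, hlast⟩
    refine ⟨hp, fun j hj => ?_⟩
    rcases Nat.lt_or_ge j (i+1) with h' | h'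
    · exact hall j (by omega)
    · have : j = i+1 := by omega
      subst this; exact hlast

lemma finset_id1 (a b c : Finset ℕ) : a \ (b \ c) = (a \ b) ∪ (c ∩ a) := by
  ext x
  simp only [Finset.mem_sdiff, Finset.mem_union, Finset.mem_inter]
  tauto

lemma finset_id2 (a b c : Finset ℕ) : a \ (b ∪ c) = (a \ b) \ (c ∩ a) := by
  ext x
  simp only [Finset.mem_sdiff, Finset.mem_union, Finset.mem_inter, not_or]
  tauto

lemma master_mid (ls : List (Finset ℕ)) (m : ℕ) (hm : ls.length = 2*m + 1)
    (p : Finset ℕ) :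
    ∀ i, i < 2*m →
      (Even i → Xat (delEnds p p ls) i = Xat ls i \ ddf ls p i) ∧
      (Odd i → Xat (delEnds p p ls) i = Xat ls i ∪ ddf ls p i) := by
  intro i
  induction i with
  | zero =>
    intro h0
    refine ⟨fun _ => ?_, fun ho => by simp at ho⟩
    rw [Xat_zero, delEnds_getD p p ls 0 (by omega), if_neg (by omega), if_pos rfl,
      Xat_zero]
    ext c
    simp only [Finset.mem_sdiff, mem_ddf, Nat.le_zero, forall_eq]
    tauto
  | succ i ih =>
    intro hi
    have hii : i < 2*m := by omega
    obtain ⟨ihe, iho⟩ := ih hii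
    have hrec : Xat (delEnds p p ls) (i+1)
        = ls.getD (i+1) ∅ \ Xat (delEnds p p ls) i := by
      rw [Xat_succ _ _ (by rw [delEnds_length]; omega),
        delEnds_getD p p ls (i+1) (by omega), if_neg (by omega), if_neg (by omega)]
    have hXrec : Xat ls (i+1) = ls.getD (i+1) ∅ \ Xat ls i :=
      Xat_succ ls i (by omega)
    rcases Nat.even_or_odd i with he | ho
    · refine ⟨fun h' => absurd he (Nat.even_add_one.1 h'), fun _ => ?_⟩
      rw [hrec, ihe he, finset_id1, ← hXrec, ← ddf_succ]
    · refine ⟨fun _ => ?_, fun h' => absurd ho (Nat.odd_add_one.1 h')⟩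
      rw [hrec, iho ho, finset_id2, ← hXrec, ← ddf_succ]

lemma master_last (ls : List (Finset ℕ)) (m : ℕ) (hm : ls.length = 2*m + 1)
    (p : Finset ℕ) :
    Xat (delEnds p p ls) (2*m) = Xat ls (2*m) \ p := by
  rcases Nat.eq_zero_or_pos m with rfl | hmpos
  · rw [Xat_zero, delEnds_getD p p ls 0 (by omega), if_pos (by omega), if_pos rfl,
      Xat_zero]
    ext c; simp only [Finset.mem_sdiff]; tauto
  · have h1 : 2*m = (2*m - 1) + 1 := by omega
    have hodd : Odd (2*m - 1) := by
      obtain ⟨k, hk⟩ : ∃ k, m = k + 1 := ⟨m - 1, by omega⟩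
      exact ⟨m - 1, by omega⟩
    have hmid := (master_mid ls m hm p (2*m - 1) (by omega)).2 hodd
    rw [h1, Xat_succ _ _ (by rw [delEnds_length]; omega),
      delEnds_getD p p ls _ (by omega), if_pos (by omega), if_neg (by omega), hmid,
      Xat_succ ls _ (by omega)]
    have hsub := ddf_sub_p ls p (2*m - 1)
    ext c
    simp only [Finset.mem_sdiff, Finset.mem_union, not_or]
    have := @hsub c
    tauto

-- ### the damage formula

lemma sum_ite_negpow (N t : ℕ) (h : t ≤ N) :
    ∑ i ∈ Finset.range N, (-1:ℤ)^i * (if i < t then 1 else 0)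
      = if Odd t then 1 else 0 := by
  rw [← Finset.sum_subset (Finset.range_subset_range.2 h) (fun x _ hx => by
    rw [Finset.mem_range] at hx
    rw [if_neg hx, mul_zero])]
  have : ∀ i ∈ Finset.range t, (-1:ℤ)^i * (if i < t then 1 else 0) = (-1:ℤ)^i := by
    intro i hi
    rw [Finset.mem_range] at hi
    rw [if_pos hi, mul_one]
  rw [Finset.sum_congr rfl this, neg_one_geom_sum]
  rcases Nat.even_or_odd t with he | ho
  · rw [if_pos he, if_neg (Nat.not_odd_iff_even.2 he)]
  · rw [if_neg (Nat.not_even_iff_odd.2 ho), if_pos ho]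

open Classical in
noncomputable def Kfn (ls : List (Finset ℕ)) (c : ℕ) : ℕ :=
  if c ∈ Aset ls then ls.length - 1 else firstMissing ls c

lemma damZ_eq (ls : List (Finset ℕ)) (m : ℕ) (hm : ls.length = 2*m + 1)
    (p : Finset ℕ) :
    damZ ls p p = ((p ∩ hatX1 ls).card : ℤ) + (p ∩ Aset ls).card
      + (p ∩ hatXn ls).card := by
  classical
  have hne : ls ≠ [] := by intro hh; rw [hh] at hm; simp at hm
  -- split both sums
  have hSL : (SL ls : ℤ)
      = ∑ i ∈ Finset.range (2*m), ((Xat ls i).card : ℤ) + (Xat ls (2*m)).card := by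
    rw [SL_eq_sum, hm, Finset.sum_range_succ]
    push_cast
    ring
  have hSE : (SL (delEnds p p ls) : ℤ)
      = ∑ i ∈ Finset.range (2*m), ((Xat (delEnds p p ls) i).card : ℤ)
        + (Xat (delEnds p p ls) (2*m)).card := by
    rw [SL_eq_sum, delEnds_length, hm, Finset.sum_range_succ]
    push_cast
    ring
  -- middle terms
  have hmidcard : ∀ i ∈ Finset.range (2*m),
      ((Xat (delEnds p p ls) i).card : ℤ)
        = (Xat ls i).card - (-1:ℤ)^i * (ddf ls p i).card := by
    intro i hi
    rw [Finset.mem_range] at hi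
    rcases Nat.even_or_odd i with he | ho
    · rw [(master_mid ls m hm p i hi).1 he, he.neg_one_pow, one_mul]
      have hsub := ddf_sub_X ls p i (by omega) he
      rw [Finset.card_sdiff_of_subset hsub]
      have := Finset.card_le_card hsub
      omega
    · rw [(master_mid ls m hm p i hi).2 ho, ho.neg_one_pow,
        Finset.card_union_of_disjoint (ddf_disj_X ls p i (by omega) ho)]
      push_cast
      ring
  -- last term
  have hA : Aset ls ⊆ Xat ls (2*m) :=
    Aset_subset_Xat ls (2*m) (by omega) (even_two_mul m)
  have hlastcard : ((Xat (delEnds p p ls) (2*m)).card : ℤ)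
      = (Xat ls (2*m)).card - (p ∩ Xat ls (2*m)).card := by
    rw [master_last ls m hm p]
    have h1 := Finset.card_sdiff_add_card_inter (Xat ls (2*m)) p
    have h2 : (Xat ls (2*m) ∩ p).card = (p ∩ Xat ls (2*m)).card := by
      rw [Finset.inter_comm]
    omega
  -- p ∩ X(2m) splits
  have hsplit : ((p ∩ Xat ls (2*m)).card : ℤ)
      = (p ∩ Aset ls).card + (p ∩ hatXn ls).card := by
    have hidx : ls.length - 1 = 2*m := by omega
    have hunion : p ∩ Xat ls (2*m) = (p ∩ Aset ls) ∪ (p ∩ hatXn ls) := by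
      ext c
      simp only [Finset.mem_inter, Finset.mem_union, hatXn, hidx, Finset.mem_sdiff]
      have := @hA c
      tauto
    have hdisj : Disjoint (p ∩ Aset ls) (p ∩ hatXn ls) := by
      simp only [Finset.disjoint_left, Finset.mem_inter, hatXn, Finset.mem_sdiff]
      rintro c ⟨_, hcA⟩ ⟨_, _, hc⟩
      exact hc hcA
    rw [hunion, Finset.card_union_of_disjoint hdisj]
    push_cast
    ring
  -- the alternating sum of the ddf cards
  have hK : ∀ c, Kfn ls c ≤ 2*m := by
    intro c
    rw [Kfn]
    by_cases hc : c ∈ Aset ls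
    · rw [if_pos hc]; omega
    · rw [if_neg hc]
      have := (firstMissing_spec ls c hne hc).1
      omega
  have hddf : ∀ i ∈ Finset.range (2*m),
      ((ddf ls p i).card : ℤ) = ∑ c ∈ p, (if i < Kfn ls c then (1:ℤ) else 0) := by
    intro i hi
    rw [Finset.mem_range] at hi
    have : ddf ls p i = p.filter (fun c => i < Kfn ls c) := by
      ext c
      simp only [mem_ddf, Finset.mem_filter]
      refine and_congr_right fun hcp => ?_
      rw [Kfn]
      by_cases hc : c ∈ Aset ls
      · rw [if_pos hc]
        have hall := (mem_Aset ls c hne).1 hc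
        constructor
        · intro _; omega
        · intro _ j hj; exact hall j (by omega)
      · rw [if_neg hc]
        obtain ⟨hlt, hnotin, hall⟩ := firstMissing_spec ls c hne hc
        constructor
        · intro hforall
          by_contra hge
          exact hnotin (hforall _ (by omega))
        · intro hlt2 j hj
          exact hall j (by omega) (by omega)
    rw [this, Finset.card_filter]
    push_cast
    exact Finset.sum_congr rfl fun c _ => by
      by_cases h' : i < Kfn ls c <;> simp [h']
  have halt : ∑ i ∈ Finset.range (2*m), (-1:ℤ)^i * (ddf ls p i).card
      = ((p ∩ hatX1 ls).card : ℤ) := by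
    calc ∑ i ∈ Finset.range (2*m), (-1:ℤ)^i * (ddf ls p i).card
        = ∑ i ∈ Finset.range (2*m), ∑ c ∈ p,
            (-1:ℤ)^i * (if i < Kfn ls c then (1:ℤ) else 0) := by
          refine Finset.sum_congr rfl fun i hi => ?_
          rw [hddf i hi, Finset.mul_sum]
      _ = ∑ c ∈ p, ∑ i ∈ Finset.range (2*m),
            (-1:ℤ)^i * (if i < Kfn ls c then (1:ℤ) else 0) := Finset.sum_comm
      _ = ∑ c ∈ p, (if Odd (Kfn ls c) then (1:ℤ) else 0) := by
          refine Finset.sum_congr rfl fun c _ => ?_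
          exact sum_ite_negpow (2*m) (Kfn ls c) (hK c)
      _ = ((p.filter (fun c => Odd (Kfn ls c))).card : ℤ) := Finset.sum_boole _ _
      _ = ((p ∩ hatX1 ls).card : ℤ) := by
          congr 1
          congr 1
          ext c
          simp only [Finset.mem_filter, Finset.mem_inter]
          refine and_congr_right fun hcp => ?_
          rw [Kfn]
          by_cases hc : c ∈ Aset ls
          · rw [if_pos hc]
            constructor
            · intro ho
              exfalso
              have : ¬ Odd (2*m+1-1) := by
                simp only [Nat.add_sub_cancel]
                exact Nat.not_odd_iff_even.2 (even_two_mul m)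
              rw [hm] at ho
              exact this ho
            · intro hmem
              rw [hatX1, Finset.mem_filter, Finset.mem_sdiff] at hmem
              exact absurd hc hmem.1.2
          · rw [if_neg hc]
            obtain ⟨hlt, hnotin, hall⟩ := firstMissing_spec ls c hne hc
            rw [hatX1, Finset.mem_filter, Finset.mem_sdiff]
            constructor
            · intro ho
              have hpos : 0 < firstMissing ls c := by
                rcases Nat.eq_zero_or_pos (firstMissing ls c) with h0 | h0
                · rw [h0] at ho; exact absurd ho (by simp)
                · exact h0
              exact ⟨⟨hall 0 hpos (by omega), hc⟩, ho⟩
            · rintro ⟨_, ho⟩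
              exact ho
  -- put it together
  rw [damZ, hSL, hSE, Finset.sum_congr rfl hmidcard, Finset.sum_sub_distrib,
    hlastcard, ← halt, hsplit]
  ring

-- ### the counting lemma

lemma count_aux (B H p1 p2 p3 : Finset ℕ)
    (h12 : p1 ≠ p2) (h13 : p1 ≠ p3) (h23 : p2 ≠ p3)
    (hc1 : p1.card = 2) (hc2 : p2.card = 2) (hc3 : p3.card = 2)
    (a1 : 3 ≤ (p1 ∩ B).card + (p1 ∩ H).card)
    (b1 : B.card + H.card ≤ (p1 ∩ B).card + (p1 ∩ H).card + 1)
    (b2 : B.card + H.card ≤ (p2 ∩ B).card + (p2 ∩ H).card + 1)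
    (b3 : B.card + H.card ≤ (p3 ∩ B).card + (p3 ∩ H).card + 1)
    (hs1 : p1 ⊆ B) (hs2 : p2 ⊆ B) : False := by
  classical
  have hnsub : ¬ p2 ⊆ p1 := fun hsub =>
    h12 (Finset.eq_of_subset_of_card_le hsub (by omega)).symm
  obtain ⟨x, hxp2, hxp1⟩ := Finset.not_subset.1 hnsub
  have hB3 : 3 ≤ B.card := by
    have hins : insert x p1 ⊆ B := Finset.insert_subset (hs2 hxp2) hs1
    have := Finset.card_le_card hins
    rwa [Finset.card_insert_of_notMem hxp1, hc1] at this
  have key : ∀ q : Finset ℕ, q.card = 2 →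
      B.card + H.card ≤ (q ∩ B).card + (q ∩ H).card + 1 →
      H ⊆ q ∧ q ⊆ B ∧ B.card = 3 := by
    intro q hq hbq
    have hqB : (q ∩ B).card ≤ 2 := by
      have := Finset.card_le_card (Finset.inter_subset_left (s₁ := q) (s₂ := B))
      omega
    have hqH : (q ∩ H).card ≤ H.card :=
      Finset.card_le_card Finset.inter_subset_right
    have heqH : q ∩ H = H :=
      Finset.eq_of_subset_of_card_le Finset.inter_subset_right (by omega)
    have hHq : H ⊆ q := by
      intro c hc
      rw [← heqH] at hc
      exact (Finset.mem_inter.1 hc).1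
    have hqB2 : (q ∩ B).card = 2 ∧ B.card = 3 := by
      rw [heqH] at hbq
      omega
    have heqB : q ∩ B = q :=
      Finset.eq_of_subset_of_card_le Finset.inter_subset_left (by omega)
    refine ⟨hHq, fun c hc => ?_, hqB2.2⟩
    rw [← heqB] at hc
    exact (Finset.mem_inter.1 hc).2
  obtain ⟨hH1, hB1, hBcard⟩ := key p1 hc1 b1
  obtain ⟨hH2, hB2sub, _⟩ := key p2 hc2 b2
  obtain ⟨hH3, hB3sub, _⟩ := key p3 hc3 b3
  have hHub : H.card ≤ 2 := by
    have := Finset.card_le_card hH1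
    omega
  have hHlb : 1 ≤ H.card := by
    have h1 := Finset.card_le_card (Finset.inter_subset_left (s₁ := p1) (s₂ := B))
    have h2 := Finset.card_le_card (Finset.inter_subset_right (s₁ := p1) (s₂ := H))
    omega
  have hHne2 : H.card ≠ 2 := by
    intro hH2card
    have e1 : H = p1 := Finset.eq_of_subset_of_card_le hH1 (by omega)
    have e2 : H = p2 := Finset.eq_of_subset_of_card_le hH2 (by omega)
    exact h12 (e1 ▸ e2 ▸ rfl)
  have hHcard : H.card = 1 := by omega
  obtain ⟨h, rfl⟩ := Finset.card_eq_one.1 hHcard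
  have hhp1 : h ∈ p1 := hH1 (Finset.mem_singleton_self h)
  have hhp2 : h ∈ p2 := hH2 (Finset.mem_singleton_self h)
  have hhp3 : h ∈ p3 := hH3 (Finset.mem_singleton_self h)
  have hhB : h ∈ B := hB1 hhp1
  have hBe : (B.erase h).card = 2 := by
    rw [Finset.card_erase_of_mem hhB]
    omega
  have hx : ∀ q : Finset ℕ, q.card = 2 → h ∈ q → q ⊆ B →
      ∃ x, q.erase h = {x} ∧ x ∈ B.erase h ∧ q = insert h {x} := by
    intro q hq hh hqB
    have : (q.erase h).card = 1 := by
      rw [Finset.card_erase_of_mem hh, hq]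
    obtain ⟨x, hxe⟩ := Finset.card_eq_one.1 this
    refine ⟨x, hxe, ?_, ?_⟩
    · have hxq : x ∈ q.erase h := hxe ▸ Finset.mem_singleton_self x
      rw [Finset.mem_erase] at hxq ⊢
      exact ⟨hxq.1, hqB hxq.2⟩
    · rw [← hxe, Finset.insert_erase hh]
  obtain ⟨x1, he1, hx1B, hp1e⟩ := hx p1 hc1 hhp1 hB1
  obtain ⟨x2, he2, hx2B, hp2e⟩ := hx p2 hc2 hhp2 hB2sub
  obtain ⟨x3, he3, hx3B, hp3e⟩ := hx p3 hc3 hhp3 hB3sub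
  have hne12 : x1 ≠ x2 := fun hh' => h12 (by rw [hp1e, hp2e, hh'])
  have hne13 : x1 ≠ x3 := fun hh' => h13 (by rw [hp1e, hp3e, hh'])
  have hne23 : x2 ≠ x3 := fun hh' => h23 (by rw [hp2e, hp3e, hh'])
  have hsub3 : ({x1, x2, x3} : Finset ℕ) ⊆ B.erase h := by
    intro c hc
    simp only [Finset.mem_insert, Finset.mem_singleton] at hc
    rcases hc with rfl | rfl | rfl <;> assumption
  have hcard3 : ({x1, x2, x3} : Finset ℕ).card = 3 := by
    rw [Finset.card_insert_of_notMem (by simp [hne12, hne13]),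
      Finset.card_insert_of_notMem (by simp [hne23]), Finset.card_singleton]
  have := Finset.card_le_card hsub3
  omega

lemma count_bad (B H W : Finset ℕ) :
    ((Finset.powersetCard 2 W).filter
      (fun p => 3 ≤ (p ∩ B).card + (p ∩ H).card ∧
        B.card + H.card ≤ (p ∩ B).card + (p ∩ H).card + 1)).card ≤ 2 := by
  classical
  by_contra hgt
  push_neg at hgt
  obtain ⟨p1, p2, p3, hm1, hm2, hm3, h12, h13, h23⟩ := Finset.two_lt_card_iff.1 hgt
  rw [Finset.mem_filter, Finset.mem_powersetCard] at hm1 hm2 hm3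
  obtain ⟨⟨hw1, hc1⟩, a1, b1⟩ := hm1
  obtain ⟨⟨hw2, hc2⟩, a2, b2⟩ := hm2
  obtain ⟨⟨hw3, hc3⟩, a3, b3⟩ := hm3
  have split : ∀ q : Finset ℕ, q.card = 2 →
      3 ≤ (q ∩ B).card + (q ∩ H).card → q ⊆ B ∨ q ⊆ H := by
    intro q hq h3
    have hqB : (q ∩ B).card ≤ 2 := by
      have := Finset.card_le_card (Finset.inter_subset_left (s₁ := q) (s₂ := B))
      omega
    have hqH : (q ∩ H).card ≤ 2 := by
      have := Finset.card_le_card (Finset.inter_subset_left (s₁ := q) (s₂ := H))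
      omega
    by_cases hB2 : (q ∩ B).card = 2
    · left
      have heq : q ∩ B = q :=
        Finset.eq_of_subset_of_card_le Finset.inter_subset_left (by omega)
      intro c hc
      rw [← heq] at hc
      exact (Finset.mem_inter.1 hc).2
    · right
      have hH2 : (q ∩ H).card = 2 := by omega
      have heq : q ∩ H = q :=
        Finset.eq_of_subset_of_card_le Finset.inter_subset_left (by omega)
      intro c hc
      rw [← heq] at hc
      exact (Finset.mem_inter.1 hc).2
  rcases split p1 hc1 a1 with s1 | s1 <;>
    rcases split p2 hc2 a2 with s2 | s2 <;>
      rcases split p3 hc3 a3 with s3 | s3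
  · exact count_aux B H p1 p2 p3 h12 h13 h23 hc1 hc2 hc3 a1 b1 b2 b3 s1 s2
  · exact count_aux B H p1 p2 p3 h12 h13 h23 hc1 hc2 hc3 a1 b1 b2 b3 s1 s2
  · exact count_aux B H p1 p3 p2 h13 h12 h23.symm hc1 hc3 hc2 a1 b1 b3 b2 s1 s3
  · exact count_aux H B p2 p3 p1 h23 h12.symm h13.symm hc2 hc3 hc1 (by omega)
      (by omega) (by omega) (by omega) s2 s3
  · exact count_aux B H p2 p3 p1 h23 h12.symm h13.symm hc2 hc3 hc1 a2 b2 b3 b1 s2 s3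
  · exact count_aux H B p1 p3 p2 h13 h12 h23.symm hc1 hc3 hc2 (by omega) (by omega)
      (by omega) (by omega) s1 s3
  · exact count_aux H B p1 p2 p3 h12 h13 h23 hc1 hc2 hc3 (by omega) (by omega)
      (by omega) (by omega) s1 s2
  · exact count_aux H B p1 p2 p3 h12 h13 h23 hc1 hc2 hc3 (by omega) (by omega)
      (by omega) (by omega) s1 s2

/-- Lemma `lem:twobad`: for a path with an odd number of vertices and lists of size 4,
and any set `W` of 4 colours, at most two of the six 2-element subsets `p ⊆ W` satisfy
`dam_{L,P}(p,p) > S_L(P) − 2|V(P)|`, i.e. there are at most 2 bad `W`-sets. -/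
theorem at_most_two_bad_sets (ls : List (Finset ℕ)) (hodd : Odd ls.length)
    (hcard : ∀ i, i < ls.length → (ls.getD i ∅).card = 4)
    (W : Finset ℕ) (hW : W.card = 4) :
    ((Finset.powersetCard 2 W).filter
      (fun p => (SL ls : ℤ) - 2 * ls.length < damZ ls p p)).card ≤ 2 := by
  classical
  obtain ⟨m0, hm0⟩ := hodd
  have hm : ls.length = 2 * m0 + 1 := by omega
  have h1 := S_lower1 ls m0 hm hcard
  have h2 := S_lower2 ls m0 hm hcard
  have hdisj : Disjoint (hatX1 ls) (Aset ls) := by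
    rw [Finset.disjoint_left]
    intro c hc
    rw [hatX1, Finset.mem_filter, Finset.mem_sdiff] at hc
    exact hc.1.2
  have hBcard : (hatX1 ls ∪ Aset ls).card = (hatX1 ls).card + (Aset ls).card :=
    Finset.card_union_of_disjoint hdisj
  refine le_trans (Finset.card_le_card ?_)
    (count_bad (hatX1 ls ∪ Aset ls) (hatXn ls) W)
  intro q hq
  rw [Finset.mem_filter] at hq ⊢
  have hd := hq.2
  rw [damZ_eq ls m0 hm q] at hd
  have hu : (q ∩ (hatX1 ls ∪ Aset ls)).card
      = (q ∩ hatX1 ls).card + (q ∩ Aset ls).card := by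
    rw [Finset.inter_union_distrib_left]
    exact Finset.card_union_of_disjoint
      (hdisj.mono Finset.inter_subset_right Finset.inter_subset_right)
  exact ⟨hq.1, by omega, by omega⟩
end

section
/- Let P be a path with endpoints u and v, and let L be a list assignment on P with |L(x)| = 4 for every vertex x of P. Then there is an injective function h from the 2-element subsets of L(u) to the 2-element subsets of L(v) such that for every 2-element subset p of L(u), there exists a 2-tuple L-colouring f of P with f(u) = p and f(v) = h(p). -/
theorem edge_inj (A B : Finset ℕ) (hA : A.card = 4) (hB : B.card = 4) :
    ∃ g : Finset ℕ → Finset ℕ, Set.InjOn g ↑(Finset.powersetCard 2 A) ∧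
      ∀ p ∈ Finset.powersetCard 2 A, g p ∈ Finset.powersetCard 2 B ∧ Disjoint p (g p) := by
  have hcd : (A \ B).card = (B \ A).card := Finset.card_sdiff_comm (hA.trans hB.symm)
  classical
  let e : (A \ B : Finset ℕ) ≃ (B \ A : Finset ℕ) := Finset.equivOfCardEq hcd
  let ψ : ℕ → ℕ := fun x => if hx : x ∈ A \ B then (e ⟨x, hx⟩ : ℕ) else x
  have hψ_pos : ∀ (x : ℕ) (hx' : x ∈ A \ B), ψ x = (e ⟨x, hx'⟩ : ℕ) := fun x hx' => dif_pos hx'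
  have hψ_neg : ∀ (x : ℕ), x ∉ A \ B → ψ x = x := fun x hx' => dif_neg hx'
  have hψB : ∀ x ∈ A, ψ x ∈ B := by
    intro x hx
    by_cases hx' : x ∈ A \ B
    · rw [hψ_pos x hx']
      exact (Finset.mem_sdiff.1 (e ⟨x, hx'⟩).2).1
    · rw [hψ_neg x hx']
      by_contra hxb
      exact hx' (Finset.mem_sdiff.2 ⟨hx, hxb⟩)
  have hψA : ∀ x ∈ A, ψ x ∈ A → ψ x = x := by
    intro x hx hxa
    by_cases hx' : x ∈ A \ B
    · exfalso
      have h1 := (Finset.mem_sdiff.1 (e ⟨x, hx'⟩).2).2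
      rw [hψ_pos x hx'] at hxa
      exact h1 hxa
    · exact hψ_neg x hx'
  have hinjA : Set.InjOn ψ ↑A := by
    intro x hx y hy hxy
    by_cases hx' : x ∈ A \ B <;> by_cases hy' : y ∈ A \ B
    · rw [hψ_pos x hx', hψ_pos y hy'] at hxy
      have := e.injective (Subtype.ext hxy)
      exact congrArg Subtype.val this
    · exfalso
      rw [hψ_pos x hx', hψ_neg y hy'] at hxy
      have h1 := (Finset.mem_sdiff.1 (e ⟨x, hx'⟩).2).2
      rw [hxy] at h1
      exact h1 hy
    · exfalso
      rw [hψ_neg x hx', hψ_pos y hy'] at hxy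
      have h1 := (Finset.mem_sdiff.1 (e ⟨y, hy'⟩).2).2
      rw [← hxy] at h1
      exact h1 hx
    · rwa [hψ_neg x hx', hψ_neg y hy'] at hxy
  refine ⟨fun p => (A \ p).image ψ, ?_, ?_⟩
  · intro p hp q hq hpq
    simp only [Finset.mem_coe, Finset.mem_powersetCard] at hp hq
    simp only at hpq
    have hAP : A \ p = A \ q := by
      apply Finset.ext
      intro x
      constructor
      · intro hx
        have : ψ x ∈ (A \ q).image ψ := hpq ▸ Finset.mem_image_of_mem ψ hx
        rcases Finset.mem_image.1 this with ⟨y, hy, hxy⟩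
        have : y = x := hinjA (Finset.mem_sdiff.1 hy).1 (Finset.mem_sdiff.1 hx).1 hxy
        exact this ▸ hy
      · intro hx
        have : ψ x ∈ (A \ p).image ψ := hpq ▸ Finset.mem_image_of_mem ψ hx
        rcases Finset.mem_image.1 this with ⟨y, hy, hxy⟩
        have : y = x := hinjA (Finset.mem_sdiff.1 hy).1 (Finset.mem_sdiff.1 hx).1 hxy
        exact this ▸ hy
    calc p = A \ (A \ p) := (Finset.sdiff_sdiff_eq_self hp.1).symm
    _ = A \ (A \ q) := by rw [hAP]
    _ = q := Finset.sdiff_sdiff_eq_self hq.1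
  · intro p hp
    rw [Finset.mem_powersetCard] at hp
    obtain ⟨hps, hpc⟩ := hp
    have hcard2 : (A \ p).card = 2 := by
      rw [Finset.card_sdiff_of_subset hps, hA, hpc]
    constructor
    · rw [Finset.mem_powersetCard]
      constructor
      · intro x hx
        rcases Finset.mem_image.1 hx with ⟨y, hy, rfl⟩
        exact hψB y (Finset.mem_sdiff.1 hy).1
      · rw [Finset.card_image_of_injOn (fun x hx y hy => hinjA
          (Finset.mem_sdiff.1 hx).1 (Finset.mem_sdiff.1 hy).1), hcard2]
    · rw [Finset.disjoint_left]
      intro x hxp hxi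
      rcases Finset.mem_image.1 hxi with ⟨y, hy, hxy⟩
      rcases Finset.mem_sdiff.1 hy with ⟨hyA, hyp⟩
      have hxA : x ∈ A := hps hxp
      have : ψ y = y := hψA y hyA (hxy ▸ hxA)
      rw [this] at hxy
      exact hyp (hxy ▸ hxp)

/-- Lemma `lem:inject`: for a path `v_1 ⋯ v_n` with all lists of size 4, there is an
injection `h` from the 2-subsets of `L(v_1)` to the 2-subsets of `L(v_n)` such that the
precolouring `f(v_1) = p`, `f(v_n) = h p` extends to a 2-tuple list colouring of the
whole path. -/
theorem exists_injection_extending (ls : List (Finset ℕ)) (hne : ls ≠ [])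
    (hcard : ∀ i, i < ls.length → (ls.getD i ∅).card = 4) :
    ∃ h : Finset ℕ → Finset ℕ,
      Set.InjOn h ↑(Finset.powersetCard 2 (ls.getD 0 ∅)) ∧
      ∀ p ∈ Finset.powersetCard 2 (ls.getD 0 ∅),
        h p ∈ Finset.powersetCard 2 (ls.getD (ls.length - 1) ∅) ∧
        ∃ f : ℕ → Finset ℕ,
          (∀ i, i < ls.length → f i ⊆ ls.getD i ∅ ∧ (f i).card = 2) ∧
          (∀ i, i + 1 < ls.length → Disjoint (f i) (f (i + 1))) ∧
          f 0 = p ∧ f (ls.length - 1) = h p := by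
  induction ls with
  | nil => exact absurd rfl hne
  | cons a rest ih =>
    cases rest with
    | nil =>
      refine ⟨id, Set.injOn_id _, ?_⟩
      intro p hp
      refine ⟨hp, fun _ => p, ?_, ?_, rfl, rfl⟩
      · intro i hi
        simp only [List.length_singleton] at hi
        interval_cases i
        rcases Finset.mem_powersetCard.1 hp with ⟨h1, h2⟩
        exact ⟨h1, h2⟩
      · intro i hi
        simp only [List.length_singleton] at hi
        omega
    | cons b rest' =>
      have hrest_ne : (b :: rest') ≠ [] := by simp
      have hcard' : ∀ i, i < (b :: rest').length → ((b :: rest').getD i ∅).card = 4 := by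
        intro i hi
        exact hcard (i + 1) (by simpa using Nat.succ_lt_succ hi)
      obtain ⟨h', hinj', hh'⟩ := ih hrest_ne hcard'
      have ha : a.card = 4 := hcard 0 (by simp)
      have hb : b.card = 4 := hcard 1 (by simp)
      obtain ⟨g, ginj, hg⟩ := edge_inj a b ha hb
      have hget0 : (b :: rest').getD 0 ∅ = b := rfl
      refine ⟨h' ∘ g, ?_, ?_⟩
      · intro p hp q hq hpq
        have hgp := (hg p (by simpa using hp)).1
        have hgq := (hg q (by simpa using hq)).1
        rw [hget0] at *
        exact ginj hp hq (hinj' (by simpa using hgp) (by simpa using hgq) hpq)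
      · intro p hp
        have hgp := (hg p (by simpa using hp)).1
        have hpdis := (hg p (by simpa using hp)).2
        obtain ⟨hmem', f', hf'1, hf'2, hf'3, hf'4⟩ := hh' (g p) (by rw [hget0]; exact hgp)
        have hidx : (a :: b :: rest').length - 1 = rest'.length + 1 := by simp
        have hidx' : (b :: rest').length - 1 = rest'.length := by simp
        refine ⟨?_, fun i => if i = 0 then p else f' (i - 1), ?_, ?_, ?_, ?_⟩
        · rw [hidx]
          have e1 : (a :: b :: rest').getD (rest'.length + 1) ∅
              = (b :: rest').getD rest'.length ∅ := rfl
          rw [e1, ← hidx']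
          exact hmem'
        · intro i hi
          cases i with
          | zero =>
            simp only [if_pos rfl]
            rcases Finset.mem_powersetCard.1 hp with ⟨h1, h2⟩
            exact ⟨h1, h2⟩
          | succ j =>
            simp only [Nat.succ_ne_zero, if_neg, Nat.add_sub_cancel]
            have e1 : (a :: b :: rest').getD (j + 1) ∅ = (b :: rest').getD j ∅ := rfl
            rw [e1]
            refine hf'1 j ?_
            simp only [List.length_cons] at hi ⊢
            omega
        · intro i hi
          cases i with
          | zero =>
            simp only [if_pos rfl, if_neg (Nat.one_ne_zero), Nat.sub_self]
            rw [hf'3]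
            exact hpdis
          | succ j =>
            have e1 : j + 1 ≠ 0 := Nat.succ_ne_zero j
            have e2 : j + 1 + 1 ≠ 0 := Nat.succ_ne_zero _
            simp only [if_neg e1, if_neg e2, Nat.add_sub_cancel]
            refine hf'2 j ?_
            simp only [List.length_cons] at hi ⊢
            omega
        · simp
        · rw [hidx]
          simp only [Nat.succ_ne_zero, if_neg, Nat.add_sub_cancel]
          rw [← hidx', hf'4]
          rfl
end

section
/- Let m be a positive integer and let B, Y, Z be finite sets of colours with B ∩ Y = ∅, B ∩ Z = ∅, and |B| + |Y| + |Z| = 4m. Then there exists a list assignment L on a path P with 3 vertices v_1, v_2, v_3 such that |L(v_i)| = 4m for all i, A = B, X̂_1 = Y, X̂_3 = Z, and S_L(P) = 8m. -/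
/-- Lemma `lem:realize`: any disjoint triple `(B, Y, Z)` with `|B| + |Y| + |Z| = 4m`
is realized as `(A, X̂_1, X̂_3)` by some list assignment on a 3-vertex path with all
lists of size `4m` and `S_L(P) = 8m`. -/
theorem realize_on_P3 (m : ℕ) (hm : 0 < m) (B Y Z : Finset ℕ)
    (hBY : B ∩ Y = ∅) (hBZ : B ∩ Z = ∅)
    (hsum : B.card + Y.card + Z.card = 4 * m) :
    ∃ ls : List (Finset ℕ), ls.length = 3 ∧
      (∀ i, i < ls.length → (ls.getD i ∅).card = 4 * m) ∧
      Aset ls = B ∧ hatX1 ls = Y ∧ hatXn ls = Z ∧ SL ls = 8 * m := by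
  classical
  set N := (B ∪ Y ∪ Z).sup id + 1 with hN
  set C := Finset.Ico N (N + Z.card) with hCdef
  set D := Finset.Ico (N + Z.card) (N + Z.card + Y.card) with hDdef
  have hlt : ∀ x ∈ B ∪ Y ∪ Z, x < N := fun x hx =>
    Nat.lt_succ_of_le (Finset.le_sup (f := id) hx)
  have hBlt : ∀ x ∈ B, x < N := fun x hx => hlt x (by simp [hx])
  have hYlt : ∀ x ∈ Y, x < N := fun x hx => hlt x (by simp [hx])
  have hZlt : ∀ x ∈ Z, x < N := fun x hx => hlt x (by simp [hx])
  have eBC : ∀ x, x ∈ B → x ∉ C := fun x hx hc => by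
    have := hBlt x hx; rw [hCdef, Finset.mem_Ico] at hc; omega
  have eBD : ∀ x, x ∈ B → x ∉ D := fun x hx hc => by
    have := hBlt x hx; rw [hDdef, Finset.mem_Ico] at hc; omega
  have eYC : ∀ x, x ∈ Y → x ∉ C := fun x hx hc => by
    have := hYlt x hx; rw [hCdef, Finset.mem_Ico] at hc; omega
  have eYD : ∀ x, x ∈ Y → x ∉ D := fun x hx hc => by
    have := hYlt x hx; rw [hDdef, Finset.mem_Ico] at hc; omega
  have eZC : ∀ x, x ∈ Z → x ∉ C := fun x hx hc => by
    have := hZlt x hx; rw [hCdef, Finset.mem_Ico] at hc; omega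
  have eZD : ∀ x, x ∈ Z → x ∉ D := fun x hx hc => by
    have := hZlt x hx; rw [hDdef, Finset.mem_Ico] at hc; omega
  have eCD : ∀ x, x ∈ C → x ∉ D := fun x hx hc => by
    rw [hCdef, Finset.mem_Ico] at hx; rw [hDdef, Finset.mem_Ico] at hc; omega
  have eBY : ∀ x, x ∈ B → x ∉ Y := fun x hx hy => by
    have : x ∈ B ∩ Y := Finset.mem_inter.2 ⟨hx, hy⟩
    rw [hBY] at this; exact absurd this (Finset.notMem_empty x)
  have eBZ : ∀ x, x ∈ B → x ∉ Z := fun x hx hy => by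
    have : x ∈ B ∩ Z := Finset.mem_inter.2 ⟨hx, hy⟩
    rw [hBZ] at this; exact absurd this (Finset.notMem_empty x)
  have hcC : C.card = Z.card := by rw [hCdef, Nat.card_Ico]; omega
  have hcD : D.card = Y.card := by rw [hDdef, Nat.card_Ico]; omega
  set L1 := B ∪ Y ∪ C with hL1
  set L2 := B ∪ C ∪ D with hL2
  set L3 := B ∪ Z ∪ D with hL3
  have dBY : Disjoint B Y := Finset.disjoint_left.2 fun {x} hx => eBY x hx
  have dBZ : Disjoint B Z := Finset.disjoint_left.2 fun {x} hx => eBZ x hx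
  have dBYC : Disjoint (B ∪ Y) C := Finset.disjoint_left.2 fun {x} hx => by
    rcases Finset.mem_union.1 hx with h | h
    · exact eBC x h
    · exact eYC x h
  have dBC : Disjoint B C := Finset.disjoint_left.2 fun {x} hx => eBC x hx
  have dBCD : Disjoint (B ∪ C) D := Finset.disjoint_left.2 fun {x} hx => by
    rcases Finset.mem_union.1 hx with h | h
    · exact eBD x h
    · exact eCD x h
  have dBZD : Disjoint (B ∪ Z) D := Finset.disjoint_left.2 fun {x} hx => by
    rcases Finset.mem_union.1 hx with h | h
    · exact eBD x h
    · exact eZD x h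
  have cL1 : L1.card = 4 * m := by
    rw [hL1, Finset.card_union_of_disjoint dBYC, Finset.card_union_of_disjoint dBY, hcC]
    omega
  have cL2 : L2.card = 4 * m := by
    rw [hL2, Finset.card_union_of_disjoint dBCD, Finset.card_union_of_disjoint dBC, hcC, hcD]
    omega
  have cL3 : L3.card = 4 * m := by
    rw [hL3, Finset.card_union_of_disjoint dBZD, Finset.card_union_of_disjoint dBZ, hcD]
    omega
  have hA : Aset [L1, L2, L3] = B := by
    show [L2, L3].foldl (· ∩ ·) L1 = B
    simp only [List.foldl]
    ext x
    simp only [hL1, hL2, hL3, Finset.mem_inter, Finset.mem_union]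
    constructor
    · rintro ⟨⟨h12, h2'⟩, h3'⟩
      rcases h12 with (hB | hY) | hC
      · exact hB
      · exfalso
        rcases h2' with (hB | hC) | hD
        · exact eBY x hB hY
        · exact eYC x hY hC
        · exact eYD x hY hD
      · exfalso
        rcases h3' with (hB | hZ) | hD
        · exact eBC x hB hC
        · exact eZC x hZ hC
        · exact eCD x hC hD
    · intro hB
      exact ⟨⟨Or.inl (Or.inl hB), Or.inl (Or.inl hB)⟩, Or.inl (Or.inl hB)⟩
  have hYnL2 : ∀ c ∈ Y, c ∉ L2 := by
    intro c hc
    rw [hL2]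
    simp only [Finset.mem_union, not_or]
    exact ⟨⟨fun h => eBY c h hc, eYC c hc⟩, eYD c hc⟩
  have hCnL3 : ∀ c ∈ C, c ∉ L3 := by
    intro c hc
    rw [hL3]
    simp only [Finset.mem_union, not_or]
    exact ⟨⟨fun h => eBC c h hc, fun h => eZC c h hc⟩, eCD c hc⟩
  have fmY : ∀ c ∈ Y, firstMissing [L1, L2, L3] c = 1 := by
    intro c hc
    have hcL1 : c ∈ L1 := by rw [hL1]; simp [hc]
    rw [firstMissing]
    set S : Set ℕ := {i | i < ([L1, L2, L3] : List (Finset ℕ)).length ∧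
      c ∉ [L1, L2, L3].getD i ∅} with hS
    have h1 : 1 ∈ S := by
      rw [hS]; exact ⟨by simp, by simpa using hYnL2 c hc⟩
    have h0 : 0 ∉ S := by
      rw [hS]; simp only [Set.mem_setOf_eq, not_and, not_not]
      intro _; simpa using hcL1
    have hmem := Nat.sInf_mem ⟨1, h1⟩
    have hle := Nat.sInf_le h1
    have hne0 : sInf S ≠ 0 := fun h => h0 (h ▸ hmem)
    omega
  have fmC : ∀ c ∈ C, firstMissing [L1, L2, L3] c = 2 := by
    intro c hc
    have hcL1 : c ∈ L1 := by rw [hL1]; simp [hc]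
    have hcL2 : c ∈ L2 := by rw [hL2]; simp [hc]
    rw [firstMissing]
    set S : Set ℕ := {i | i < ([L1, L2, L3] : List (Finset ℕ)).length ∧
      c ∉ [L1, L2, L3].getD i ∅} with hS
    have h2 : 2 ∈ S := by
      rw [hS]; exact ⟨by simp, by simpa using hCnL3 c hc⟩
    have h0 : 0 ∉ S := by
      rw [hS]; simp only [Set.mem_setOf_eq, not_and, not_not]
      intro _; simpa using hcL1
    have h1 : 1 ∉ S := by
      rw [hS]; simp only [Set.mem_setOf_eq, not_and, not_not]
      intro _; simpa using hcL2
    have hmem := Nat.sInf_mem ⟨2, h2⟩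
    have hle := Nat.sInf_le h2
    have hne0 : sInf S ≠ 0 := fun h => h0 (h ▸ hmem)
    have hne1 : sInf S ≠ 1 := fun h => h1 (h ▸ hmem)
    omega
  have hX1 : hatX1 [L1, L2, L3] = Y := by
    rw [hatX1, hA]
    ext c
    simp only [Finset.mem_filter, Finset.mem_sdiff, List.getD_cons_zero]
    constructor
    · rintro ⟨⟨hcl1, hcB⟩, hodd⟩
      rw [hL1] at hcl1
      rcases Finset.mem_union.1 hcl1 with h | h
      · rcases Finset.mem_union.1 h with h | h
        · exact absurd h hcB
        · exact h
      · rw [fmC c h] at hodd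
        exact absurd hodd (by decide)
    · intro hc
      refine ⟨⟨?_, fun h => eBY c h hc⟩, ?_⟩
      · rw [hL1]; simp [hc]
      · rw [fmY c hc]; decide
  have hD2 : L2 \ L1 = D := by
    ext x
    simp only [hL1, hL2, Finset.mem_sdiff, Finset.mem_union]
    constructor
    · rintro ⟨h, hn⟩
      rcases h with (hB | hC) | hD
      · exact absurd (Or.inl (Or.inl hB)) hn
      · exact absurd (Or.inr hC) hn
      · exact hD
    · intro hD
      refine ⟨Or.inr hD, ?_⟩
      rintro ((hB | hY) | hC)
      · exact eBD x hB hD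
      · exact eYD x hY hD
      · exact eCD x hC hD
  have hLD : L3 \ D = B ∪ Z := by
    ext x
    have h2 := eBD x; have h6 := eZD x
    simp only [hL3, Finset.mem_sdiff, Finset.mem_union]
    tauto
  have hseq : Xseq ∅ [L1, L2, L3] = [L1, D, B ∪ Z] := by
    simp only [Xseq, Finset.sdiff_empty]
    rw [hD2, hLD]
  have hXn : hatXn [L1, L2, L3] = Z := by
    rw [hatXn, hA, Xat, hseq]
    have hidx : ([L1, D, B ∪ Z] : List (Finset ℕ)).getD
        (([L1, L2, L3] : List (Finset ℕ)).length - 1) ∅ = B ∪ Z := rfl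
    rw [hidx]
    ext x
    simp only [Finset.mem_sdiff, Finset.mem_union]
    constructor
    · rintro ⟨hB | hZ', hn⟩
      · exact absurd hB hn
      · exact hZ'
    · intro hZ'
      exact ⟨Or.inr hZ', fun hB => eBZ x hB hZ'⟩
  have hSL : SL [L1, L2, L3] = 8 * m := by
    rw [SL, hseq]
    simp only [List.map_cons, List.map_nil, List.sum_cons, List.sum_nil]
    rw [cL1, Finset.card_union_of_disjoint dBZ, hcD]
    omega
  refine ⟨[L1, L2, L3], rfl, ?_, hA, hX1, hXn, hSL⟩
  · intro i hi
    simp only [List.length_cons, List.length_nil] at hi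
    interval_cases i
    · simpa using cL1
    · simpa using cL2
    · simpa using cL3
end

section
/- Let m be a positive integer and let G be a graph containing a path P on 5 vertices, each of which has degree 2 in G. Let G' be the graph obtained from G by deleting the middle vertex of P and identifying its two neighbours into a single vertex (adjacent to all remaining former neighbours of those two vertices). Then G is (4m:2m)-choosable if and only if G' is (4m:2m)-choosable. -/
/-- `f` is a `b`-tuple `L`-colouring of `G`: each vertex gets a `b`-set of colours
from its list, and adjacent vertices get disjoint sets. -/
def IsTupleListColoring {V : Type*} (G : SimpleGraph V) (L : V → Finset ℕ) (b : ℕ)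
    (f : V → Finset ℕ) : Prop :=
  (∀ v, f v ⊆ L v) ∧ (∀ v, (f v).card = b) ∧ ∀ ⦃u v⦄, G.Adj u v → Disjoint (f u) (f v)

/-- `G` is `(L:b)`-colourable. -/
def ListColorable {V : Type*} (G : SimpleGraph V) (L : V → Finset ℕ) (b : ℕ) : Prop :=
  ∃ f, IsTupleListColoring G L b f

/-- `G` is `(a:b)`-choosable. -/
def Choosable {V : Type*} (G : SimpleGraph V) (a b : ℕ) : Prop :=
  ∀ L : V → Finset ℕ, (∀ v, (L v).card = a) → ListColorable G L b

/-- `G` is the theta graph `Θ_{r,s,t}`: two vertices `u ≠ v` joined by three internally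
vertex-disjoint paths of `r`, `s`, `t` edges, which together cover all vertices and edges. -/
def IsThetaGraph {V : Type*} (G : SimpleGraph V) (u v : V) (r s t : ℕ) : Prop :=
  u ≠ v ∧ ∃ (P Q R : G.Walk u v),
    P.IsPath ∧ Q.IsPath ∧ R.IsPath ∧
    P.length = r ∧ Q.length = s ∧ R.length = t ∧
    (∀ x, x ∈ P.support → x ∈ Q.support → x = u ∨ x = v) ∧
    (∀ x, x ∈ P.support → x ∈ R.support → x = u ∨ x = v) ∧
    (∀ x, x ∈ Q.support → x ∈ R.support → x = u ∨ x = v) ∧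
    (∀ x : V, x ∈ P.support ∨ x ∈ Q.support ∨ x ∈ R.support) ∧
    (∀ e ∈ G.edgeSet, e ∈ P.edges ∨ e ∈ Q.edges ∨ e ∈ R.edges)

/-- The graph obtained from `G` by deleting the vertex `b` and identifying the vertices
`a` and `c` into a single vertex (represented by `a`), which is adjacent to all
remaining former neighbours of `a` and of `c`. -/
def deleteAndMerge {V : Type*} (G : SimpleGraph V) (a b c : V) :
    SimpleGraph {x : V // x ≠ b ∧ x ≠ c} where
  Adj x y := x.1 ≠ y.1 ∧
    (G.Adj x.1 y.1 ∨ (x.1 = a ∧ G.Adj c y.1) ∨ (y.1 = a ∧ G.Adj x.1 c))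
  symm := by
    constructor
    rintro ⟨x, hx⟩ ⟨y, hy⟩ ⟨hne, h⟩
    refine ⟨hne.symm, ?_⟩
    rcases h with h | ⟨hx', h⟩ | ⟨hy', h⟩
    · exact Or.inl h.symm
    · exact Or.inr (Or.inr ⟨hx', h.symm⟩)
    · exact Or.inr (Or.inl ⟨hy', h.symm⟩)
  loopless := by constructor; rintro ⟨x, hx⟩ ⟨hne, -⟩; exact hne rfl

lemma p5aux_greedy (n D : ℕ) (Lb Pb zb : Finset ℕ) (hP : Pb ⊆ Lb) (hL : Lb.card = 2*n)
    (hz : (zb ∩ Lb).card ≤ n) (hD : Pb.card + (zb ∩ (Lb \ Pb)).card ≤ n + D) :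
    ∃ y : Finset ℕ, y ⊆ Lb ∧ Disjoint y zb ∧ y.card = n ∧ (y ∩ Pb).card ≤ D := by
  classical
  set B := (Lb \ Pb) \ zb with hBdef
  by_cases hB : n ≤ B.card
  · obtain ⟨y, hy, hyc⟩ := Finset.exists_subset_card_eq hB
    refine ⟨y, ?_, ?_, hyc, ?_⟩
    · exact hy.trans ((Finset.sdiff_subset).trans Finset.sdiff_subset)
    · exact Finset.disjoint_left.mpr fun a ha hz1 =>
        (Finset.mem_sdiff.mp (hy ha)).2 hz1
    · have : y ∩ Pb = ∅ := by
        apply Finset.eq_empty_of_forall_notMem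
        intro a ha
        obtain ⟨ha1, ha2⟩ := Finset.mem_inter.mp ha
        exact (Finset.mem_sdiff.mp (Finset.mem_sdiff.mp (hy ha1)).1).2 ha2
      simp [this]
  · push_neg at hB
    have hLz : n ≤ (Lb \ zb).card := by
      have := Finset.card_sdiff_add_card_inter Lb zb
      have h2 : (Lb ∩ zb).card = (zb ∩ Lb).card := by rw [Finset.inter_comm]
      omega
    have hsplit : Lb \ zb = B ∪ ((Pb \ zb)) := by
      ext a
      simp only [hBdef, Finset.mem_union, Finset.mem_sdiff]
      constructor
      · rintro ⟨haL, haz⟩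
        by_cases hp : a ∈ Pb
        · exact Or.inr ⟨hp, haz⟩
        · exact Or.inl ⟨⟨haL, hp⟩, haz⟩
      · rintro (⟨⟨haL, _⟩, haz⟩ | ⟨hp, haz⟩)
        · exact ⟨haL, haz⟩
        · exact ⟨hP hp, haz⟩
    have hdisj : Disjoint B (Pb \ zb) := by
      refine Finset.disjoint_left.mpr ?_
      intro a ha hb
      exact (Finset.mem_sdiff.mp (Finset.mem_sdiff.mp ha).1).2 (Finset.mem_sdiff.mp hb).1
    have hcards : (Lb \ zb).card = B.card + (Pb \ zb).card := by
      rw [hsplit, Finset.card_union_of_disjoint hdisj]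
    have hPz : n - B.card ≤ (Pb \ zb).card := by omega
    obtain ⟨S, hS, hSc⟩ := Finset.exists_subset_card_eq hPz
    refine ⟨B ∪ S, ?_, ?_, ?_, ?_⟩
    · intro a ha
      rcases Finset.mem_union.mp ha with h | h
      · exact (Finset.sdiff_subset.trans Finset.sdiff_subset) h
      · exact hP (Finset.mem_sdiff.mp (hS h)).1
    · refine Finset.disjoint_left.mpr ?_
      intro a ha hz1
      rcases Finset.mem_union.mp ha with h | h
      · exact (Finset.mem_sdiff.mp h).2 hz1
      · exact (Finset.mem_sdiff.mp (hS h)).2 hz1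
    · have hdisj2 : Disjoint B S := hdisj.mono_right hS
      rw [Finset.card_union_of_disjoint hdisj2, hSc]
      omega
    · have hsub : (B ∪ S) ∩ Pb ⊆ S := by
        intro a ha
        obtain ⟨h1, h2⟩ := Finset.mem_inter.mp ha
        rcases Finset.mem_union.mp h1 with h | h
        · exact absurd h2 (Finset.mem_sdiff.mp (Finset.mem_sdiff.mp h).1).2
        · exact h
      have h1 := Finset.card_le_card hsub
      have hBcard : B.card + ((Lb \ Pb) ∩ zb).card = (Lb \ Pb).card :=
        Finset.card_sdiff_add_card_inter _ _
      have hLP : (Lb \ Pb).card + Pb.card = Lb.card :=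
        Finset.card_sdiff_add_card_eq_card hP
      have h2 : (zb ∩ (Lb \ Pb)).card = ((Lb \ Pb) ∩ zb).card := by rw [Finset.inter_comm]
      omega

lemma p5aux_ssel (m : ℕ) (U W M y1 y5 : Finset ℕ)
    (hU : U.card = 4*m) (hW : W.card = 4*m) (hM : M.card = 4*m)
    (hy1 : (U ∩ y1).card ≤ 2*m) (hy5 : (W ∩ y5).card ≤ 2*m)
    (hHF : (U ∩ y1).card + (W ∩ y5).card ≤ (M \ ((U \ y1) ∪ (W \ y5))).card + 2*m) :
    ∃ S ⊆ M, S.card = 2*m ∧ (U ∩ (y1 ∪ S)).card ≤ 2*m ∧ (W ∩ (y5 ∪ S)).card ≤ 2*m := by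
  classical
  set α := (U ∩ y1).card with hα
  set β := (W ∩ y5).card with hβ
  set Fr := M \ ((U \ y1) ∪ (W \ y5)) with hFr
  set XU := (M ∩ (U \ y1)) \ (W \ y5) with hXU
  set XW := (M ∩ (W \ y5)) \ (U \ y1) with hXW
  set XB := (M ∩ (U \ y1)) ∩ (W \ y5) with hXB
  -- cardinality identities
  have c1 : XU.card + XB.card = (M ∩ (U \ y1)).card := by
    have h := Finset.card_sdiff_add_card_inter (M ∩ (U \ y1)) (W \ y5)
    rw [← hXU, ← hXB] at h
    exact h
  have c2 : Fr.card + XW.card = (M \ (U \ y1)).card := by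
    have e1 : Fr = (M \ (U \ y1)) \ (W \ y5) := by
      ext a; simp only [hFr, Finset.mem_sdiff, Finset.mem_union]; tauto
    have e2 : XW = (M \ (U \ y1)) ∩ (W \ y5) := by
      ext a; simp only [hXW, Finset.mem_sdiff, Finset.mem_inter]; tauto
    rw [e1, e2]
    exact Finset.card_sdiff_add_card_inter _ _
  have c3 : (M ∩ (U \ y1)).card + (M \ (U \ y1)).card = 4*m := by
    have := Finset.card_inter_add_card_sdiff M (U \ y1)
    omega
  have cutU : (M ∩ (U \ y1)).card + α ≤ 4*m := by
    have h1 : (M ∩ (U \ y1)).card ≤ (U \ y1).card :=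
      Finset.card_le_card Finset.inter_subset_right
    have h2 : (U \ y1).card + (U ∩ y1).card = U.card :=
      Finset.card_sdiff_add_card_inter _ _
    omega
  have cutW : (M ∩ (W \ y5)).card + β ≤ 4*m := by
    have h1 : (M ∩ (W \ y5)).card ≤ (W \ y5).card :=
      Finset.card_le_card Finset.inter_subset_right
    have h2 : (W \ y5).card + (W ∩ y5).card = W.card :=
      Finset.card_sdiff_add_card_inter _ _
    omega
  have c1' : XW.card + XB.card = (M ∩ (W \ y5)).card := by
    have e2 : XB = (M ∩ (W \ y5)) ∩ (U \ y1) := by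
      ext a; simp only [hXB, Finset.mem_inter]; tauto
    have e1 : XW = (M ∩ (W \ y5)) \ (U \ y1) := rfl
    rw [e1, e2]
    exact Finset.card_sdiff_add_card_inter _ _
  set u := min XU.card (2*m - α) with hu
  set w := min XW.card (2*m - β) with hw
  set b := min XB.card (min ((2*m - α) - u) ((2*m - β) - w)) with hb
  have htot : 2*m ≤ Fr.card + u + w + b := by omega
  obtain ⟨U0, hU0, hU0c⟩ := Finset.exists_subset_card_eq (le_refl u |>.trans (min_le_left _ _))
  obtain ⟨W0, hW0, hW0c⟩ := Finset.exists_subset_card_eq (le_refl w |>.trans (min_le_left _ _))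
  obtain ⟨B0, hB0, hB0c⟩ := Finset.exists_subset_card_eq
    ((min_le_left XB.card _) : b ≤ XB.card)
  -- pool
  have hdUW : Disjoint U0 W0 := by
    refine Finset.disjoint_left.mpr fun a ha hb' => ?_
    have h1 := Finset.mem_sdiff.mp (hU0 ha)
    have h2 := Finset.mem_sdiff.mp (hW0 hb')
    exact h2.2 (Finset.mem_inter.mp h1.1).2
  have hdUB : Disjoint U0 B0 := by
    refine Finset.disjoint_left.mpr fun a ha hb' => ?_
    have h1 := Finset.mem_sdiff.mp (hU0 ha)
    have h2 := Finset.mem_inter.mp (hB0 hb')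
    exact h1.2 h2.2
  have hdWB : Disjoint W0 B0 := by
    refine Finset.disjoint_left.mpr fun a ha hb' => ?_
    have h1 := Finset.mem_sdiff.mp (hW0 ha)
    have h2 := Finset.mem_inter.mp (hB0 hb')
    exact h1.2 (Finset.mem_inter.mp h2.1).2
  have hdF : ∀ T : Finset ℕ, T ⊆ XU ∪ XW ∪ XB → Disjoint Fr T := by
    intro T hT
    refine Finset.disjoint_left.mpr fun a ha hb' => ?_
    have h1 := Finset.mem_sdiff.mp ha
    rcases Finset.mem_union.mp (hT hb') with h | h
    · rcases Finset.mem_union.mp h with h' | h'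
      · exact h1.2 (Finset.mem_union.mpr (Or.inl (Finset.mem_inter.mp (Finset.mem_sdiff.mp h').1).2))
      · exact h1.2 (Finset.mem_union.mpr (Or.inr (Finset.mem_inter.mp (Finset.mem_sdiff.mp h').1).2))
    · exact h1.2 (Finset.mem_union.mpr (Or.inl (Finset.mem_inter.mp (Finset.mem_inter.mp h).1).2))
  set pool := Fr ∪ (U0 ∪ W0 ∪ B0) with hpool
  have hpoolc : pool.card = Fr.card + u + w + b := by
    have d1 : Disjoint (U0 ∪ W0) B0 := Finset.disjoint_union_left.mpr ⟨hdUB, hdWB⟩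
    have hc1 : (U0 ∪ W0 ∪ B0).card = u + w + b := by
      rw [Finset.card_union_of_disjoint d1, Finset.card_union_of_disjoint hdUW,
        hU0c, hW0c, hB0c]
    have d2 : Disjoint Fr (U0 ∪ W0 ∪ B0) := by
      apply hdF
      refine Finset.union_subset (Finset.union_subset ?_ ?_) ?_
      · exact hU0.trans (Finset.subset_union_left.trans Finset.subset_union_left)
      · exact hW0.trans (Finset.subset_union_right.trans Finset.subset_union_left)
      · exact hB0.trans Finset.subset_union_right
    rw [hpool, Finset.card_union_of_disjoint d2, hc1]
    omega
  have hge : 2*m ≤ pool.card := by omega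
  obtain ⟨S, hSpool, hSc⟩ := Finset.exists_subset_card_eq hge
  have hSM : S ⊆ M := by
    intro a ha
    rcases Finset.mem_union.mp (hSpool ha) with h | h
    · exact (Finset.mem_sdiff.mp h).1
    · rcases Finset.mem_union.mp h with h' | h'
      · rcases Finset.mem_union.mp h' with h'' | h''
        · exact (Finset.mem_inter.mp (Finset.mem_sdiff.mp (hU0 h'')).1).1
        · exact (Finset.mem_inter.mp (Finset.mem_sdiff.mp (hW0 h'')).1).1
      · exact (Finset.mem_inter.mp (Finset.mem_inter.mp (hB0 h')).1).1
  refine ⟨S, hSM, hSc, ?_, ?_⟩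
  · -- U budget
    have hsub : U ∩ (y1 ∪ S) ⊆ (U ∩ y1) ∪ (U0 ∪ B0) := by
      intro a ha
      obtain ⟨haU, hay⟩ := Finset.mem_inter.mp ha
      rcases Finset.mem_union.mp hay with h | h
      · exact Finset.mem_union.mpr (Or.inl (Finset.mem_inter.mpr ⟨haU, h⟩))
      · by_cases hy : a ∈ y1
        · exact Finset.mem_union.mpr (Or.inl (Finset.mem_inter.mpr ⟨haU, hy⟩))
        · -- a ∈ S, a ∈ U \ y1
          have haUy : a ∈ U \ y1 := Finset.mem_sdiff.mpr ⟨haU, hy⟩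
          rcases Finset.mem_union.mp (hSpool h) with h1 | h1
          · exact absurd (Finset.mem_union.mpr (Or.inl haUy)) (Finset.mem_sdiff.mp h1).2
          · rcases Finset.mem_union.mp h1 with h2 | h2
            · rcases Finset.mem_union.mp h2 with h3 | h3
              · exact Finset.mem_union.mpr (Or.inr (Finset.mem_union.mpr (Or.inl h3)))
              · exact absurd haUy (Finset.mem_sdiff.mp (hW0 h3)).2
            · exact Finset.mem_union.mpr (Or.inr (Finset.mem_union.mpr (Or.inr h2)))
    have h1 := Finset.card_le_card hsub
    have h2 : ((U ∩ y1) ∪ (U0 ∪ B0)).card ≤ α + (u + b) := by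
      calc ((U ∩ y1) ∪ (U0 ∪ B0)).card ≤ (U ∩ y1).card + (U0 ∪ B0).card :=
            Finset.card_union_le _ _
        _ ≤ α + (U0.card + B0.card) := by
            have := Finset.card_union_le U0 B0; omega
        _ = α + (u + b) := by rw [hU0c, hB0c]
    omega
  · -- W budget
    have hsub : W ∩ (y5 ∪ S) ⊆ (W ∩ y5) ∪ (W0 ∪ B0) := by
      intro a ha
      obtain ⟨haW, hay⟩ := Finset.mem_inter.mp ha
      rcases Finset.mem_union.mp hay with h | h
      · exact Finset.mem_union.mpr (Or.inl (Finset.mem_inter.mpr ⟨haW, h⟩))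
      · by_cases hy : a ∈ y5
        · exact Finset.mem_union.mpr (Or.inl (Finset.mem_inter.mpr ⟨haW, hy⟩))
        · have haWy : a ∈ W \ y5 := Finset.mem_sdiff.mpr ⟨haW, hy⟩
          rcases Finset.mem_union.mp (hSpool h) with h1 | h1
          · exact absurd (Finset.mem_union.mpr (Or.inr haWy)) (Finset.mem_sdiff.mp h1).2
          · rcases Finset.mem_union.mp h1 with h2 | h2
            · rcases Finset.mem_union.mp h2 with h3 | h3
              · exact absurd haWy (Finset.mem_sdiff.mp (hU0 h3)).2
              · exact Finset.mem_union.mpr (Or.inr (Finset.mem_union.mpr (Or.inl h3)))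
            · exact Finset.mem_union.mpr (Or.inr (Finset.mem_union.mpr (Or.inr h2)))
    have h1 := Finset.card_le_card hsub
    have h2 : ((W ∩ y5) ∪ (W0 ∪ B0)).card ≤ β + (w + b) := by
      calc ((W ∩ y5) ∪ (W0 ∪ B0)).card ≤ (W ∩ y5).card + (W0 ∪ B0).card :=
            Finset.card_union_le _ _
        _ ≤ β + (W0.card + B0.card) := by
            have := Finset.card_union_le W0 B0; omega
        _ = β + (w + b) := by rw [hW0c, hB0c]
    omega

lemma p5aux_hf (m : ℕ) (U W M L1 L5 y1 y5 : Finset ℕ)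
    (hy1L : y1 ⊆ L1) (hy5L : y5 ⊆ L5)
    (h : (y1 ∩ ((U \ M) ∩ L1)).card + (y5 ∩ ((W \ M) ∩ L5)).card
        + ((M ∩ U ∩ W) ∩ (y1 ∪ y5)).card ≤ 2*m + (M \ (U ∪ W)).card) :
    (U ∩ y1).card + (W ∩ y5).card ≤ (M \ ((U \ y1) ∪ (W \ y5))).card + 2*m := by
  classical
  set K := M ∩ U ∩ W with hK
  have i1 : (U ∩ y1).card = ((U \ M) ∩ y1).card + (((U ∩ M) \ W) ∩ y1).card
      + (K ∩ y1).card := by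
    have e : U ∩ y1 = ((U \ M) ∩ y1) ∪ ((((U ∩ M) \ W)) ∩ y1) ∪ (K ∩ y1) := by
      ext a
      simp only [hK, Finset.mem_inter, Finset.mem_union, Finset.mem_sdiff]
      tauto
    have d1 : Disjoint ((U \ M) ∩ y1) ((((U ∩ M) \ W)) ∩ y1) := by
      refine Finset.disjoint_left.mpr fun a ha hb => ?_
      simp only [Finset.mem_inter, Finset.mem_sdiff] at ha hb
      tauto
    have d2 : Disjoint (((U \ M) ∩ y1) ∪ ((((U ∩ M) \ W)) ∩ y1)) (K ∩ y1) := by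
      refine Finset.disjoint_left.mpr fun a ha hb => ?_
      simp only [hK, Finset.mem_inter, Finset.mem_union, Finset.mem_sdiff] at ha hb
      tauto
    rw [e, Finset.card_union_of_disjoint d2, Finset.card_union_of_disjoint d1]
  have i2 : (W ∩ y5).card = ((W \ M) ∩ y5).card + (((W ∩ M) \ U) ∩ y5).card
      + (K ∩ y5).card := by
    have e : W ∩ y5 = ((W \ M) ∩ y5) ∪ ((((W ∩ M) \ U)) ∩ y5) ∪ (K ∩ y5) := by
      ext a
      simp only [hK, Finset.mem_inter, Finset.mem_union, Finset.mem_sdiff]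
      tauto
    have d1 : Disjoint ((W \ M) ∩ y5) ((((W ∩ M) \ U)) ∩ y5) := by
      refine Finset.disjoint_left.mpr fun a ha hb => ?_
      simp only [Finset.mem_inter, Finset.mem_sdiff] at ha hb
      tauto
    have d2 : Disjoint (((W \ M) ∩ y5) ∪ ((((W ∩ M) \ U)) ∩ y5)) (K ∩ y5) := by
      refine Finset.disjoint_left.mpr fun a ha hb => ?_
      simp only [hK, Finset.mem_inter, Finset.mem_union, Finset.mem_sdiff] at ha hb
      tauto
    rw [e, Finset.card_union_of_disjoint d2, Finset.card_union_of_disjoint d1]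
  have i3 : (M \ ((U \ y1) ∪ (W \ y5))).card = (M \ (U ∪ W)).card
      + (((U ∩ M) \ W) ∩ y1).card + (((W ∩ M) \ U) ∩ y5).card + (K ∩ y1 ∩ y5).card := by
    have e : M \ ((U \ y1) ∪ (W \ y5)) = (M \ (U ∪ W)) ∪ ((((U ∩ M) \ W)) ∩ y1)
        ∪ ((((W ∩ M) \ U)) ∩ y5) ∪ (K ∩ y1 ∩ y5) := by
      ext a
      simp only [hK, Finset.mem_inter, Finset.mem_union, Finset.mem_sdiff]
      tauto
    have d1 : Disjoint (M \ (U ∪ W)) ((((U ∩ M) \ W)) ∩ y1) := by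
      refine Finset.disjoint_left.mpr fun a ha hb => ?_
      simp only [Finset.mem_inter, Finset.mem_union, Finset.mem_sdiff] at ha hb
      tauto
    have d2 : Disjoint ((M \ (U ∪ W)) ∪ ((((U ∩ M) \ W)) ∩ y1)) ((((W ∩ M) \ U)) ∩ y5) := by
      refine Finset.disjoint_left.mpr fun a ha hb => ?_
      simp only [Finset.mem_inter, Finset.mem_union, Finset.mem_sdiff] at ha hb
      tauto
    have d3 : Disjoint ((M \ (U ∪ W)) ∪ ((((U ∩ M) \ W)) ∩ y1) ∪ ((((W ∩ M) \ U)) ∩ y5))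
        (K ∩ y1 ∩ y5) := by
      refine Finset.disjoint_left.mpr fun a ha hb => ?_
      simp only [hK, Finset.mem_inter, Finset.mem_union, Finset.mem_sdiff] at ha hb
      tauto
    rw [e, Finset.card_union_of_disjoint d3, Finset.card_union_of_disjoint d2,
      Finset.card_union_of_disjoint d1]
  have i4 : (K ∩ y1).card + (K ∩ y5).card = (K ∩ (y1 ∪ y5)).card + (K ∩ y1 ∩ y5).card := by
    have h1 := Finset.card_union_add_card_inter (K ∩ y1) (K ∩ y5)
    have e1 : (K ∩ y1) ∪ (K ∩ y5) = K ∩ (y1 ∪ y5) := by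
      ext a; simp only [Finset.mem_inter, Finset.mem_union]; tauto
    have e2 : (K ∩ y1) ∩ (K ∩ y5) = K ∩ y1 ∩ y5 := by
      ext a; simp only [Finset.mem_inter]; tauto
    rw [e1, e2] at h1
    omega
  have j1 : ((U \ M) ∩ y1).card = (y1 ∩ ((U \ M) ∩ L1)).card := by
    congr 1
    ext a
    simp only [Finset.mem_inter, Finset.mem_sdiff]
    constructor
    · rintro ⟨⟨h1, h2⟩, h3⟩; exact ⟨h3, ⟨h1, h2⟩, hy1L h3⟩
    · rintro ⟨h3, ⟨h1, h2⟩, _⟩; exact ⟨⟨h1, h2⟩, h3⟩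
  have j2 : ((W \ M) ∩ y5).card = (y5 ∩ ((W \ M) ∩ L5)).card := by
    congr 1
    ext a
    simp only [Finset.mem_inter, Finset.mem_sdiff]
    constructor
    · rintro ⟨⟨h1, h2⟩, h3⟩; exact ⟨h3, ⟨h1, h2⟩, hy5L h3⟩
    · rintro ⟨h3, ⟨h1, h2⟩, _⟩; exact ⟨⟨h1, h2⟩, h3⟩
  omega
def p5fresh (c0 n : ℕ) : Finset ℕ := (Finset.range n).image (fun i => c0 + i)

lemma p5fresh_mem {c0 n x : ℕ} : x ∈ p5fresh c0 n ↔ c0 ≤ x ∧ x < c0 + n := by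
  simp only [p5fresh, Finset.mem_image, Finset.mem_range]
  constructor
  · rintro ⟨i, hi, rfl⟩; omega
  · rintro ⟨h1, h2⟩; exact ⟨x - c0, by omega, by omega⟩

lemma p5fresh_card (c0 n : ℕ) : (p5fresh c0 n).card = n := by
  rw [p5fresh, Finset.card_image_of_injective _ (fun a b h => by omega)]
  exact Finset.card_range n

lemma p5nbr {V : Type} {G : SimpleGraph V} {w a b : V} (hab : a ≠ b)
    (ha : G.Adj w a) (hb : G.Adj w b) (hdeg : (G.neighborSet w).ncard = 2) :
    ∀ {x}, G.Adj w x → x = a ∨ x = b := by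
  intro x hx
  obtain ⟨c, d, hcd, hset⟩ := Set.ncard_eq_two.mp hdeg
  have hma : a ∈ ({c, d} : Set V) := hset ▸ ha
  have hmb : b ∈ ({c, d} : Set V) := hset ▸ hb
  have hmx : x ∈ ({c, d} : Set V) := hset ▸ hx
  simp only [Set.mem_insert_iff, Set.mem_singleton_iff] at hma hmb hmx
  rcases hma with rfl | rfl <;> rcases hmb with rfl | rfl <;> tauto

lemma p5other {V : Type} {G : SimpleGraph V} {w a : V}
    (ha : G.Adj w a) (hdeg : (G.neighborSet w).ncard = 2) :
    ∃ u, G.Adj w u ∧ u ≠ a ∧ ∀ {x}, G.Adj w x → x = a ∨ x = u := by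
  obtain ⟨c, d, hcd, hset⟩ := Set.ncard_eq_two.mp hdeg
  have hma : a ∈ ({c, d} : Set V) := hset ▸ ha
  have hc : G.Adj w c := by
    have : c ∈ G.neighborSet w := by rw [hset]; exact Set.mem_insert _ _
    exact this
  have hd : G.Adj w d := by
    have : d ∈ G.neighborSet w := by rw [hset]; simp
    exact this
  simp only [Set.mem_insert_iff, Set.mem_singleton_iff] at hma
  rcases hma with rfl | rfl
  · refine ⟨d, hd, hcd.symm, ?_⟩
    intro x hx
    have hmx : x ∈ ({a, d} : Set V) := hset ▸ hx
    simpa using hmx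
  · refine ⟨c, hc, hcd, ?_⟩
    intro x hx
    have hmx : x ∈ ({c, a} : Set V) := hset ▸ hx
    simp only [Set.mem_insert_iff, Set.mem_singleton_iff] at hmx
    tauto


lemma p5compl {m : ℕ} {a b A : Finset ℕ} (haA : a ⊆ A) (hbA : b ⊆ A)
    (hd : Disjoint a b) (hac : a.card = 2*m) (hbc : b.card = 2*m) (hAc : A.card = 4*m) :
    a = A \ b := by
  apply Finset.eq_of_subset_of_card_le
  · exact Finset.subset_sdiff.mpr ⟨haA, hd⟩
  · rw [Finset.card_sdiff_of_subset hbA]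
    omega

set_option maxHeartbeats 1600000 in
/-- Lemma `lem:p5`: if `G` contains a path `v₁v₂v₃v₄v₅` on 5 vertices, each of degree 2
in `G`, and `G'` is obtained from `G` by deleting the middle vertex `v₃` and identifying
its two neighbours `v₂` and `v₄`, then `G` is `(4m:2m)`-choosable iff `G'` is
`(4m:2m)`-choosable. -/
theorem p5_reduction (m : ℕ) (hm : 0 < m) (V : Type) (G : SimpleGraph V)
    (v₁ v₂ v₃ v₄ v₅ : V) (hdist : [v₁, v₂, v₃, v₄, v₅].Pairwise (· ≠ ·))
    (h12 : G.Adj v₁ v₂) (h23 : G.Adj v₂ v₃) (h34 : G.Adj v₃ v₄) (h45 : G.Adj v₄ v₅)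
    (hdeg : ∀ w ∈ [v₁, v₂, v₃, v₄, v₅], (G.neighborSet w).ncard = 2) :
    Choosable G (4 * m) (2 * m) ↔
      Choosable (deleteAndMerge G v₂ v₃ v₄) (4 * m) (2 * m) := by
  classical
  rw [List.pairwise_cons, List.pairwise_cons, List.pairwise_cons, List.pairwise_cons] at hdist
  obtain ⟨hne1, hne2, hne3, hne4, -⟩ := hdist
  have h12' : v₁ ≠ v₂ := hne1 v₂ (by simp)
  have h13 : v₁ ≠ v₃ := hne1 v₃ (by simp)
  have h14 : v₁ ≠ v₄ := hne1 v₄ (by simp)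
  have h15 : v₁ ≠ v₅ := hne1 v₅ (by simp)
  have hv23 : v₂ ≠ v₃ := hne2 v₃ (by simp)
  have hv24 : v₂ ≠ v₄ := hne2 v₄ (by simp)
  have hv25 : v₂ ≠ v₅ := hne2 v₅ (by simp)
  have hv34 : v₃ ≠ v₄ := hne3 v₄ (by simp)
  have hv35 : v₃ ≠ v₅ := hne3 v₅ (by simp)
  have hv45 : v₄ ≠ v₅ := hne4 v₅ (by simp)
  have hdeg1 := hdeg v₁ (by simp)
  have hdeg2 := hdeg v₂ (by simp)
  have hdeg3 := hdeg v₃ (by simp)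
  have hdeg4 := hdeg v₄ (by simp)
  have hdeg5 := hdeg v₅ (by simp)
  have hN2 : ∀ {x}, G.Adj v₂ x → x = v₁ ∨ x = v₃ := p5nbr h13 h12.symm h23 hdeg2
  have hN3 : ∀ {x}, G.Adj v₃ x → x = v₂ ∨ x = v₄ := p5nbr hv24 h23.symm h34 hdeg3
  have hN4 : ∀ {x}, G.Adj v₄ x → x = v₃ ∨ x = v₅ := p5nbr hv35 h34.symm h45 hdeg4
  obtain ⟨u1, hu1adj, hu1ne2, hu1char⟩ := p5other h12 hdeg1
  obtain ⟨u5, hu5adj, hu5ne4, hu5char⟩ := p5other h45.symm hdeg5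
  have hu1ne1 : u1 ≠ v₁ := fun h => G.loopless.irrefl v₁ (h ▸ hu1adj)
  have hu1ne3 : u1 ≠ v₃ := by
    intro h
    rcases hN3 (h ▸ hu1adj).symm with h' | h'
    · exact h12' h'
    · exact h14 h'
  have hu1ne4 : u1 ≠ v₄ := by
    intro h
    rcases hN4 (h ▸ hu1adj).symm with h' | h'
    · exact h13 h'
    · exact h15 h'
  have hu5ne5 : u5 ≠ v₅ := fun h => G.loopless.irrefl v₅ (h ▸ hu5adj)
  have hu5ne2 : u5 ≠ v₂ := by
    intro h
    rcases hN2 (h ▸ hu5adj).symm with h' | h'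
    · exact h15 h'.symm
    · exact hv35 h'.symm
  have hu5ne3 : u5 ≠ v₃ := by
    intro h
    rcases hN3 (h ▸ hu5adj).symm with h' | h'
    · exact hv25 h'.symm
    · exact hv45 h'.symm
  constructor
  · intro hG L' hL'
    set A' := L' ⟨v₂, ⟨hv23, hv24⟩⟩ with hA'
    set L : V → Finset ℕ := fun x => if h : x ≠ v₃ ∧ x ≠ v₄ then L' ⟨x, h⟩ else A'
      with hLdef
    have hLcard : ∀ v, (L v).card = 4*m := by
      intro v; by_cases h : v ≠ v₃ ∧ v ≠ v₄
      · simp only [hLdef, dif_pos h]; exact hL' _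
      · simp only [hLdef, dif_neg h]; exact hL' _
    obtain ⟨f, hf1, hf2, hf3⟩ := hG L hLcard
    have hLv : ∀ (x : {x : V // x ≠ v₃ ∧ x ≠ v₄}), L x.1 = L' x := by
      intro x; simp only [hLdef, dif_pos x.2]
    have hL3 : L v₃ = A' := by
      simp only [hLdef, dif_neg (by simp : ¬(v₃ ≠ v₃ ∧ v₃ ≠ v₄))]
    have hL4 : L v₄ = A' := by
      simp only [hLdef, dif_neg (by simp : ¬(v₄ ≠ v₃ ∧ v₄ ≠ v₄))]
    have hsub2 : f v₂ ⊆ A' := by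
      have := hf1 v₂
      rwa [hLv ⟨v₂, ⟨hv23, hv24⟩⟩] at this
    have hsub3 : f v₃ ⊆ A' := hL3 ▸ hf1 v₃
    have hsub4 : f v₄ ⊆ A' := hL4 ▸ hf1 v₄
    have h24 : f v₂ = f v₄ := by
      have e2 : f v₂ = A' \ f v₃ :=
        p5compl hsub2 hsub3 (hf3 h23) (hf2 v₂) (hf2 v₃) (hL' _)
      have e4 : f v₄ = A' \ f v₃ :=
        p5compl hsub4 hsub3 (hf3 h34).symm (hf2 v₄) (hf2 v₃) (hL' _)
      rw [e2, e4]
    refine ⟨fun x => f x.1, fun x => ?_, fun x => hf2 x.1, ?_⟩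
    · rw [← hLv x]; exact hf1 x.1
    · rintro x y ⟨hne, hcase⟩
      rcases hcase with h | ⟨hx2, h⟩ | ⟨hy2, h⟩
      · exact hf3 h
      · have hd : Disjoint (f v₄) (f y.1) := hf3 h
        simp only [hx2, h24]
        exact hd
      · have hd : Disjoint (f x.1) (f v₄) := hf3 h
        simp only [hy2, h24]
        exact hd
  · intro hG' L hL
    by_cases hadj : G.Adj v₁ v₅
    · exfalso
      obtain ⟨f', hf1', hf2', hf3'⟩ := hG' (fun _ => Finset.range (4*m))
        (fun _ => by simp)
      set a1 : {x : V // x ≠ v₃ ∧ x ≠ v₄} := ⟨v₁, ⟨h13, h14⟩⟩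
      set a2 : {x : V // x ≠ v₃ ∧ x ≠ v₄} := ⟨v₂, ⟨hv23, hv24⟩⟩
      set a5 : {x : V // x ≠ v₃ ∧ x ≠ v₄} := ⟨v₅, ⟨hv35.symm, hv45.symm⟩⟩
      have d12 : (deleteAndMerge G v₂ v₃ v₄).Adj a1 a2 := ⟨h12', Or.inl h12⟩
      have d25 : (deleteAndMerge G v₂ v₃ v₄).Adj a2 a5 := ⟨hv25, Or.inr (Or.inl ⟨rfl, h45⟩)⟩
      have d15 : (deleteAndMerge G v₂ v₃ v₄).Adj a1 a5 := ⟨h15, Or.inl hadj⟩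
      have hd1 : Disjoint (f' a1) (f' a2) := hf3' d12
      have hd2 : Disjoint (f' a2) (f' a5) := hf3' d25
      have hd3 : Disjoint (f' a1) (f' a5) := hf3' d15
      have hcu : (f' a1 ∪ f' a2 ∪ f' a5).card = 6*m := by
        rw [Finset.card_union_of_disjoint, Finset.card_union_of_disjoint hd1,
          hf2' a1, hf2' a2, hf2' a5]
        · ring
        · exact Finset.disjoint_union_left.mpr ⟨hd3, hd2⟩
      have hsub : f' a1 ∪ f' a2 ∪ f' a5 ⊆ Finset.range (4*m) := by
        refine Finset.union_subset (Finset.union_subset ?_ ?_) ?_ <;>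
          first
            | exact (hf1' a1).trans (by simp)
            | exact (hf1' a2).trans (by simp)
            | exact (hf1' a5).trans (by simp)
      have := Finset.card_le_card hsub
      rw [hcu, Finset.card_range] at this
      omega
    · -- main case : ¬ G.Adj v₁ v₅
      have hu1ne5 : u1 ≠ v₅ := fun h => hadj (h ▸ hu1adj)
      have hu5ne1 : u5 ≠ v₁ := fun h => hadj (h ▸ hu5adj).symm
      set U := L v₂ with hUdef
      set M := L v₃ with hMdef
      set W := L v₄ with hWdef
      set L1 := L v₁ with hL1def
      set L5 := L v₅ with hL5def
      have hUc : U.card = 4*m := hL v₂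
      have hMc : M.card = 4*m := hL v₃
      have hWc : W.card = 4*m := hL v₄
      have hL1c : L1.card = 4*m := hL v₁
      have hL5c : L5.card = 4*m := hL v₅
      set P := (U \ M) ∩ L1 with hPdef
      set Q := (W \ M) ∩ L5 with hQdef
      set K := M ∩ U ∩ W with hKdef
      set K1 := K ∩ (L1 ∪ L5) with hK1def
      set p := P.card with hpdef
      set q := Q.card with hqdef
      set k1 := K1.card with hk1def
      set Bb := ((L1 ∪ L5 ∪ U ∪ M ∪ W ∪ L u1 ∪ L u5).sup id) + 1 with hBbdef
      have hBbig : ∀ x ∈ L1 ∪ L5 ∪ U ∪ M ∪ W ∪ L u1 ∪ L u5, x < Bb := by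
        intro x hx
        have := Finset.le_sup (f := id) hx
        simp only [id] at this
        omega
      have hBL1 : ∀ x ∈ L1, x < Bb := fun x hx => hBbig x (by simp [hx])
      have hBL5 : ∀ x ∈ L5, x < Bb := fun x hx => hBbig x (by simp [hx])
      have hBM : ∀ x ∈ M, x < Bb := fun x hx => hBbig x (by simp [hx])
      have hBu1 : ∀ x ∈ L u1, x < Bb := fun x hx => hBbig x (by simp [hx])
      have hBu5 : ∀ x ∈ L u5, x < Bb := fun x hx => hBbig x (by simp [hx])
      have hPL1 : P ⊆ L1 := Finset.inter_subset_right
      have hQL5 : Q ⊆ L5 := Finset.inter_subset_right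
      have hK1M : K1 ⊆ M := fun a ha =>
        (Finset.mem_inter.mp (Finset.mem_inter.mp (Finset.mem_inter.mp ha).1).1).1
      have hPnM : ∀ a ∈ P, a ∉ M := fun a ha =>
        (Finset.mem_sdiff.mp (Finset.mem_inter.mp ha).1).2
      have hQnM : ∀ a ∈ Q, a ∉ M := fun a ha =>
        (Finset.mem_sdiff.mp (Finset.mem_inter.mp ha).1).2
      have hpc : p ≤ 4*m := by
        have := Finset.card_le_card hPL1
        omega
      have hqc : q ≤ 4*m := by
        have := Finset.card_le_card hQL5
        omega
      have hk1le : k1 ≤ 4*m := by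
        have := Finset.card_le_card hK1M
        omega
      set f1 := min p (4*m - k1) with hf1def
      set f5 := min q ((4*m - k1) - f1) with hf5def
      set fil := ((4*m - k1) - f1) - f5 with hfildef
      have hf1p : f1 ≤ p := min_le_left _ _
      have hf5q : f5 ≤ q := min_le_left _ _
      set F1 := p5fresh Bb p with hF1def
      set F1A := p5fresh Bb f1 with hF1Adef
      set F5 := p5fresh (Bb + p) q with hF5def
      set F5A := p5fresh (Bb + p) f5 with hF5Adef
      set FilA := p5fresh (Bb + p + q) fil with hFilAdef
      have hF1AF1 : F1A ⊆ F1 := by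
        intro a ha
        rw [hF1Adef, p5fresh_mem] at ha
        rw [hF1def, p5fresh_mem]
        omega
      have hF5AF5 : F5A ⊆ F5 := by
        intro a ha
        rw [hF5Adef, p5fresh_mem] at ha
        rw [hF5def, p5fresh_mem]
        omega
      have hF1fresh : ∀ a ∈ F1, Bb ≤ a := by
        intro a ha; rw [hF1def, p5fresh_mem] at ha; omega
      have hF5fresh : ∀ a ∈ F5, Bb ≤ a := by
        intro a ha; rw [hF5def, p5fresh_mem] at ha; omega
      have hFilfresh : ∀ a ∈ FilA, Bb ≤ a := by
        intro a ha; rw [hFilAdef, p5fresh_mem] at ha; omega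
      set A := F1A ∪ F5A ∪ FilA ∪ K1 with hAdef
      have hdA12 : Disjoint F1A F5A := by
        rw [Finset.disjoint_left]
        intro a ha hb
        rw [hF1Adef, p5fresh_mem] at ha
        rw [hF5Adef, p5fresh_mem] at hb
        omega
      have hdA1f : Disjoint F1A FilA := by
        rw [Finset.disjoint_left]
        intro a ha hb
        rw [hF1Adef, p5fresh_mem] at ha
        rw [hFilAdef, p5fresh_mem] at hb
        omega
      have hdA5f : Disjoint F5A FilA := by
        rw [Finset.disjoint_left]
        intro a ha hb
        rw [hF5Adef, p5fresh_mem] at ha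
        rw [hFilAdef, p5fresh_mem] at hb
        omega
      have hdAK : Disjoint (F1A ∪ F5A ∪ FilA) K1 := by
        rw [Finset.disjoint_left]
        intro a ha hb
        have hlt : a < Bb := hBM a (hK1M hb)
        rcases Finset.mem_union.mp ha with h | h
        · rcases Finset.mem_union.mp h with h' | h'
          · exact absurd hlt (not_lt.mpr (hF1fresh a (hF1AF1 h')))
          · exact absurd hlt (not_lt.mpr (hF5fresh a (hF5AF5 h')))
        · exact absurd hlt (not_lt.mpr (hFilfresh a h))
      have hAc : A.card = 4*m := by
        rw [hAdef, Finset.card_union_of_disjoint hdAK,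
          Finset.card_union_of_disjoint (Finset.disjoint_union_left.mpr ⟨hdA1f, hdA5f⟩),
          Finset.card_union_of_disjoint hdA12, hF1Adef, hF5Adef, hFilAdef,
          p5fresh_card, p5fresh_card, p5fresh_card]
        omega
      set Λ1 := (L1 \ P) ∪ F1 with hΛ1def
      set Λ5 := (L5 \ Q) ∪ F5 with hΛ5def
      have hΛ1c : Λ1.card = 4*m := by
        rw [hΛ1def, Finset.card_union_of_disjoint, Finset.card_sdiff_of_subset hPL1, hL1c,
          hF1def, p5fresh_card]
        · omega
        · rw [Finset.disjoint_left]
          intro a ha hb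
          exact absurd (hBL1 a (Finset.mem_sdiff.mp ha).1) (not_lt.mpr (hF1fresh a hb))
      have hΛ5c : Λ5.card = 4*m := by
        rw [hΛ5def, Finset.card_union_of_disjoint, Finset.card_sdiff_of_subset hQL5, hL5c,
          hF5def, p5fresh_card]
        · omega
        · rw [Finset.disjoint_left]
          intro a ha hb
          exact absurd (hBL5 a (Finset.mem_sdiff.mp ha).1) (not_lt.mpr (hF5fresh a hb))
      set L'' : {x : V // x ≠ v₃ ∧ x ≠ v₄} → Finset ℕ := fun x =>
        if x.1 = v₂ then A else if x.1 = v₁ then Λ1 else if x.1 = v₅ then Λ5 else L x.1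
        with hL''def
      have hL''c : ∀ x, (L'' x).card = 4*m := by
        intro x
        simp only [hL''def]
        split_ifs
        · exact hAc
        · exact hΛ1c
        · exact hΛ5c
        · exact hL x.1
      obtain ⟨f', hf1', hf2', hf3'⟩ := hG' L'' hL''c
      have eL2 : L'' ⟨v₂, ⟨hv23, hv24⟩⟩ = A := by simp [hL''def]
      have eL1 : L'' ⟨v₁, ⟨h13, h14⟩⟩ = Λ1 := by simp [hL''def, h12']
      have eL5 : L'' ⟨v₅, ⟨hv35.symm, hv45.symm⟩⟩ = Λ5 := by
        simp [hL''def, Ne.symm hv25, Ne.symm h15]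
      have eLu1 : L'' ⟨u1, ⟨hu1ne3, hu1ne4⟩⟩ = L u1 := by
        simp [hL''def, hu1ne2, hu1ne1, hu1ne5]
      have eLu5 : L'' ⟨u5, ⟨hu5ne3, hu5ne4⟩⟩ = L u5 := by
        simp [hL''def, hu5ne2, hu5ne1, hu5ne5]
      set c := f' ⟨v₂, ⟨hv23, hv24⟩⟩ with hcdef
      set φ1 := f' ⟨v₁, ⟨h13, h14⟩⟩ with hφ1def
      set φ5 := f' ⟨v₅, ⟨hv35.symm, hv45.symm⟩⟩ with hφ5def
      set z1 := f' ⟨u1, ⟨hu1ne3, hu1ne4⟩⟩ with hz1def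
      set z5 := f' ⟨u5, ⟨hu5ne3, hu5ne4⟩⟩ with hz5def
      have hcA : c ⊆ A := eL2 ▸ hf1' _
      have hφ1Λ : φ1 ⊆ Λ1 := eL1 ▸ hf1' _
      have hφ5Λ : φ5 ⊆ Λ5 := eL5 ▸ hf1' _
      have hz1L : z1 ⊆ L u1 := eLu1 ▸ hf1' _
      have hz5L : z5 ⊆ L u5 := eLu5 ▸ hf1' _
      have hcC : c.card = 2*m := hf2' _
      have hφ1C : φ1.card = 2*m := hf2' _
      have hφ5C : φ5.card = 2*m := hf2' _
      have hz1C : z1.card = 2*m := hf2' _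
      have hz5C : z5.card = 2*m := hf2' _
      have hdcφ1 : Disjoint c φ1 := hf3' ⟨Ne.symm h12', Or.inl h12.symm⟩
      have hdcφ5 : Disjoint c φ5 := hf3' ⟨hv25, Or.inr (Or.inl ⟨rfl, h45⟩)⟩
      have hdφ1z1 : Disjoint φ1 z1 := hf3' ⟨Ne.symm hu1ne1, Or.inl hu1adj⟩
      have hdφ5z5 : Disjoint φ5 z5 := hf3' ⟨Ne.symm hu5ne5, Or.inl hu5adj⟩
      set cK := c ∩ K1 with hcKdef
      set β1 := (c ∩ F1A).card with hβ1def
      set β5 := (c ∩ F5A).card with hβ5def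
      set βf := (c ∩ FilA).card with hβfdef
      set γ := cK.card with hγdef
      have hβ1b : β1 ≤ f1 := by
        have h1 : (c ∩ F1A).card ≤ F1A.card := Finset.card_le_card Finset.inter_subset_right
        have h2 : F1A.card = f1 := by rw [hF1Adef]; exact p5fresh_card _ _
        omega
      have hβ5b : β5 ≤ f5 := by
        have h1 : (c ∩ F5A).card ≤ F5A.card := Finset.card_le_card Finset.inter_subset_right
        have h2 : F5A.card = f5 := by rw [hF5Adef]; exact p5fresh_card _ _
        omega
      have hβfb : βf ≤ fil := by
        have h1 : (c ∩ FilA).card ≤ FilA.card := Finset.card_le_card Finset.inter_subset_right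
        have h2 : FilA.card = fil := by rw [hFilAdef]; exact p5fresh_card _ _
        omega
      have hγb : γ ≤ k1 := by
        have h1 : cK.card ≤ K1.card := Finset.card_le_card Finset.inter_subset_right
        omega
      have hcpart : β1 + β5 + βf + γ = 2*m := by
        have e : c = ((c ∩ F1A) ∪ (c ∩ F5A) ∪ (c ∩ FilA)) ∪ cK := by
          ext a
          simp only [hcKdef, Finset.mem_union, Finset.mem_inter]
          constructor
          · intro ha
            have h2 := hcA ha
            rw [hAdef] at h2
            simp only [Finset.mem_union] at h2
            tauto
          · tauto
        have d1 : Disjoint (c ∩ F1A) (c ∩ F5A) :=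
          hdA12.mono Finset.inter_subset_right Finset.inter_subset_right
        have d2 : Disjoint ((c ∩ F1A) ∪ (c ∩ F5A)) (c ∩ FilA) := by
          refine Finset.disjoint_union_left.mpr ⟨?_, ?_⟩
          · exact hdA1f.mono Finset.inter_subset_right Finset.inter_subset_right
          · exact hdA5f.mono Finset.inter_subset_right Finset.inter_subset_right
        have d3 : Disjoint ((c ∩ F1A) ∪ (c ∩ F5A) ∪ (c ∩ FilA)) cK := by
          refine hdAK.mono ?_ (by rw [hcKdef]; exact Finset.inter_subset_right)
          refine Finset.union_subset (Finset.union_subset ?_ ?_) ?_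
          · exact Finset.inter_subset_right.trans
              (Finset.subset_union_left.trans Finset.subset_union_left)
          · exact Finset.inter_subset_right.trans
              (Finset.subset_union_right.trans Finset.subset_union_left)
          · exact Finset.inter_subset_right.trans Finset.subset_union_right
        have hcc := hcC
        rw [e, Finset.card_union_of_disjoint d3, Finset.card_union_of_disjoint d2,
          Finset.card_union_of_disjoint d1] at hcc
        omega
      set P1s := P ∪ (cK ∩ L1) with hP1sdef
      set P5s := Q ∪ (cK ∩ L5) with hP5sdef
      have hcKM : cK ⊆ M := fun a ha => hK1M (Finset.mem_inter.mp ha).2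
      have hP1sL : P1s ⊆ L1 := Finset.union_subset hPL1 Finset.inter_subset_right
      have hP5sL : P5s ⊆ L5 := Finset.union_subset hQL5 Finset.inter_subset_right
      have hdPcK : Disjoint P (cK ∩ L1) := by
        rw [Finset.disjoint_left]
        intro a ha hb
        exact hPnM a ha (hcKM (Finset.mem_inter.mp hb).1)
      have hdQcK : Disjoint Q (cK ∩ L5) := by
        rw [Finset.disjoint_left]
        intro a ha hb
        exact hQnM a ha (hcKM (Finset.mem_inter.mp hb).1)
      have hP1sc : P1s.card = p + (cK ∩ L1).card := by
        rw [hP1sdef, Finset.card_union_of_disjoint hdPcK, hpdef]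
      have hP5sc : P5s.card = q + (cK ∩ L5).card := by
        rw [hP5sdef, Finset.card_union_of_disjoint hdQcK, hqdef]
      have hprobe1 : (z1 ∩ (L1 \ P1s)).card + β1 + (cK ∩ L1).card + 2*m ≤ 4*m := by
        have hs1 : z1 ∩ (L1 \ P1s) ⊆ Λ1 := by
          intro a ha
          obtain ⟨haz, haL⟩ := Finset.mem_inter.mp ha
          obtain ⟨haL1, hanP⟩ := Finset.mem_sdiff.mp haL
          rw [hΛ1def]
          refine Finset.mem_union.mpr (Or.inl (Finset.mem_sdiff.mpr ⟨haL1, fun hp => hanP ?_⟩))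
          rw [hP1sdef]
          exact Finset.mem_union.mpr (Or.inl hp)
        have hs2 : c ∩ F1A ⊆ Λ1 := by
          intro a ha
          rw [hΛ1def]
          exact Finset.mem_union.mpr (Or.inr (hF1AF1 (Finset.mem_inter.mp ha).2))
        have hs3 : cK ∩ L1 ⊆ Λ1 := by
          intro a ha
          obtain ⟨hacK, haL1⟩ := Finset.mem_inter.mp ha
          rw [hΛ1def]
          exact Finset.mem_union.mpr
            (Or.inl (Finset.mem_sdiff.mpr ⟨haL1, fun hp => hPnM a hp (hcKM hacK)⟩))
        have d12' : Disjoint (z1 ∩ (L1 \ P1s)) (c ∩ F1A) := by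
          rw [Finset.disjoint_left]
          intro a ha hb
          have h1 : a < Bb := hBu1 a (hz1L (Finset.mem_inter.mp ha).1)
          exact absurd h1 (not_lt.mpr (hF1fresh a (hF1AF1 (Finset.mem_inter.mp hb).2)))
        have d13' : Disjoint (z1 ∩ (L1 \ P1s)) (cK ∩ L1) := by
          rw [Finset.disjoint_left]
          intro a ha hb
          apply (Finset.mem_sdiff.mp (Finset.mem_inter.mp ha).2).2
          rw [hP1sdef]
          exact Finset.mem_union.mpr (Or.inr hb)
        have d23' : Disjoint (c ∩ F1A) (cK ∩ L1) := by
          rw [Finset.disjoint_left]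
          intro a ha hb
          have h1 : a < Bb := hBM a (hcKM (Finset.mem_inter.mp hb).1)
          exact absurd h1 (not_lt.mpr (hF1fresh a (hF1AF1 (Finset.mem_inter.mp ha).2)))
        have dφ1' : Disjoint (z1 ∩ (L1 \ P1s) ∪ (c ∩ F1A) ∪ (cK ∩ L1)) φ1 := by
          rw [Finset.disjoint_left]
          intro a ha hb
          rcases Finset.mem_union.mp ha with h | h
          · rcases Finset.mem_union.mp h with h' | h'
            · exact Finset.disjoint_right.mp hdφ1z1 (Finset.mem_inter.mp h').1 hb
            · exact Finset.disjoint_left.mp hdcφ1 (Finset.mem_inter.mp h').1 hb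
          · exact Finset.disjoint_left.mp hdcφ1
              (Finset.mem_inter.mp (Finset.mem_inter.mp h).1).1 hb
        have hsub : (z1 ∩ (L1 \ P1s) ∪ (c ∩ F1A) ∪ (cK ∩ L1)) ∪ φ1 ⊆ Λ1 :=
          Finset.union_subset (Finset.union_subset (Finset.union_subset hs1 hs2) hs3) hφ1Λ
        have hcard := Finset.card_le_card hsub
        rw [Finset.card_union_of_disjoint dφ1',
          Finset.card_union_of_disjoint (Finset.disjoint_union_left.mpr ⟨d13', d23'⟩),
          Finset.card_union_of_disjoint d12', hΛ1c] at hcard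
        omega
      have hprobe5 : (z5 ∩ (L5 \ P5s)).card + β5 + (cK ∩ L5).card + 2*m ≤ 4*m := by
        have hs1 : z5 ∩ (L5 \ P5s) ⊆ Λ5 := by
          intro a ha
          obtain ⟨haz, haL⟩ := Finset.mem_inter.mp ha
          obtain ⟨haL5, hanQ⟩ := Finset.mem_sdiff.mp haL
          rw [hΛ5def]
          refine Finset.mem_union.mpr (Or.inl (Finset.mem_sdiff.mpr ⟨haL5, fun hp => hanQ ?_⟩))
          rw [hP5sdef]
          exact Finset.mem_union.mpr (Or.inl hp)
        have hs2 : c ∩ F5A ⊆ Λ5 := by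
          intro a ha
          rw [hΛ5def]
          exact Finset.mem_union.mpr (Or.inr (hF5AF5 (Finset.mem_inter.mp ha).2))
        have hs3 : cK ∩ L5 ⊆ Λ5 := by
          intro a ha
          obtain ⟨hacK, haL5⟩ := Finset.mem_inter.mp ha
          rw [hΛ5def]
          exact Finset.mem_union.mpr
            (Or.inl (Finset.mem_sdiff.mpr ⟨haL5, fun hp => hQnM a hp (hcKM hacK)⟩))
        have d12' : Disjoint (z5 ∩ (L5 \ P5s)) (c ∩ F5A) := by
          rw [Finset.disjoint_left]
          intro a ha hb
          have h1 : a < Bb := hBu5 a (hz5L (Finset.mem_inter.mp ha).1)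
          exact absurd h1 (not_lt.mpr (hF5fresh a (hF5AF5 (Finset.mem_inter.mp hb).2)))
        have d13' : Disjoint (z5 ∩ (L5 \ P5s)) (cK ∩ L5) := by
          rw [Finset.disjoint_left]
          intro a ha hb
          apply (Finset.mem_sdiff.mp (Finset.mem_inter.mp ha).2).2
          rw [hP5sdef]
          exact Finset.mem_union.mpr (Or.inr hb)
        have d23' : Disjoint (c ∩ F5A) (cK ∩ L5) := by
          rw [Finset.disjoint_left]
          intro a ha hb
          have h1 : a < Bb := hBM a (hcKM (Finset.mem_inter.mp hb).1)
          exact absurd h1 (not_lt.mpr (hF5fresh a (hF5AF5 (Finset.mem_inter.mp ha).2)))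
        have dφ5' : Disjoint (z5 ∩ (L5 \ P5s) ∪ (c ∩ F5A) ∪ (cK ∩ L5)) φ5 := by
          rw [Finset.disjoint_left]
          intro a ha hb
          rcases Finset.mem_union.mp ha with h | h
          · rcases Finset.mem_union.mp h with h' | h'
            · exact Finset.disjoint_right.mp hdφ5z5 (Finset.mem_inter.mp h').1 hb
            · exact Finset.disjoint_left.mp hdcφ5 (Finset.mem_inter.mp h').1 hb
          · exact Finset.disjoint_left.mp hdcφ5
              (Finset.mem_inter.mp (Finset.mem_inter.mp h).1).1 hb
        have hsub : (z5 ∩ (L5 \ P5s) ∪ (c ∩ F5A) ∪ (cK ∩ L5)) ∪ φ5 ⊆ Λ5 :=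
          Finset.union_subset (Finset.union_subset (Finset.union_subset hs1 hs2) hs3) hφ5Λ
        have hcard := Finset.card_le_card hsub
        rw [Finset.card_union_of_disjoint dφ5',
          Finset.card_union_of_disjoint (Finset.disjoint_union_left.mpr ⟨d13', d23'⟩),
          Finset.card_union_of_disjoint d12', hΛ5c] at hcard
        omega
      have hz1L1 : (z1 ∩ L1).card ≤ 2*m := by
        have h1 : (z1 ∩ L1).card ≤ z1.card := Finset.card_le_card Finset.inter_subset_left
        omega
      have hz5L5 : (z5 ∩ L5).card ≤ 2*m := by
        have h1 : (z5 ∩ L5).card ≤ z5.card := Finset.card_le_card Finset.inter_subset_left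
        omega
      obtain ⟨y1, hy1L1, hy1z1, hy1c, hy1P⟩ :=
        p5aux_greedy (2*m) (p - β1) L1 P1s z1 hP1sL (by omega) hz1L1 (by omega)
      obtain ⟨y5, hy5L5, hy5z5, hy5c, hy5P⟩ :=
        p5aux_greedy (2*m) (q - β5) L5 P5s z5 hP5sL (by omega) hz5L5 (by omega)
      have hsplit1 : (y1 ∩ P1s).card = (y1 ∩ P).card + (y1 ∩ cK).card := by
        have e : y1 ∩ P1s = (y1 ∩ P) ∪ (y1 ∩ cK) := by
          ext a
          constructor
          · intro ha
            obtain ⟨hay, haP⟩ := Finset.mem_inter.mp ha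
            rw [hP1sdef] at haP
            rcases Finset.mem_union.mp haP with h | h
            · exact Finset.mem_union.mpr (Or.inl (Finset.mem_inter.mpr ⟨hay, h⟩))
            · exact Finset.mem_union.mpr
                (Or.inr (Finset.mem_inter.mpr ⟨hay, (Finset.mem_inter.mp h).1⟩))
          · intro ha
            rcases Finset.mem_union.mp ha with h | h
            · obtain ⟨hay, haP⟩ := Finset.mem_inter.mp h
              refine Finset.mem_inter.mpr ⟨hay, ?_⟩
              rw [hP1sdef]
              exact Finset.mem_union.mpr (Or.inl haP)
            · obtain ⟨hay, hacK⟩ := Finset.mem_inter.mp h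
              refine Finset.mem_inter.mpr ⟨hay, ?_⟩
              rw [hP1sdef]
              exact Finset.mem_union.mpr (Or.inr (Finset.mem_inter.mpr ⟨hacK, hy1L1 hay⟩))
        have d : Disjoint (y1 ∩ P) (y1 ∩ cK) := by
          rw [Finset.disjoint_left]
          intro a ha hb
          exact hPnM a (Finset.mem_inter.mp ha).2 (hcKM (Finset.mem_inter.mp hb).2)
        rw [e, Finset.card_union_of_disjoint d]
      have hsplit5 : (y5 ∩ P5s).card = (y5 ∩ Q).card + (y5 ∩ cK).card := by
        have e : y5 ∩ P5s = (y5 ∩ Q) ∪ (y5 ∩ cK) := by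
          ext a
          constructor
          · intro ha
            obtain ⟨hay, haQ⟩ := Finset.mem_inter.mp ha
            rw [hP5sdef] at haQ
            rcases Finset.mem_union.mp haQ with h | h
            · exact Finset.mem_union.mpr (Or.inl (Finset.mem_inter.mpr ⟨hay, h⟩))
            · exact Finset.mem_union.mpr
                (Or.inr (Finset.mem_inter.mpr ⟨hay, (Finset.mem_inter.mp h).1⟩))
          · intro ha
            rcases Finset.mem_union.mp ha with h | h
            · obtain ⟨hay, haQ⟩ := Finset.mem_inter.mp h
              refine Finset.mem_inter.mpr ⟨hay, ?_⟩
              rw [hP5sdef]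
              exact Finset.mem_union.mpr (Or.inl haQ)
            · obtain ⟨hay, hacK⟩ := Finset.mem_inter.mp h
              refine Finset.mem_inter.mpr ⟨hay, ?_⟩
              rw [hP5sdef]
              exact Finset.mem_union.mpr (Or.inr (Finset.mem_inter.mpr ⟨hacK, hy5L5 hay⟩))
        have d : Disjoint (y5 ∩ Q) (y5 ∩ cK) := by
          rw [Finset.disjoint_left]
          intro a ha hb
          exact hQnM a (Finset.mem_inter.mp ha).2 (hcKM (Finset.mem_inter.mp hb).2)
        rw [e, Finset.card_union_of_disjoint d]
      have hKy : (K ∩ (y1 ∪ y5)).card ≤ (k1 - γ) + ((y1 ∩ cK).card + (y5 ∩ cK).card) := by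
        have hsub : K ∩ (y1 ∪ y5) ⊆ (K1 \ c) ∪ ((y1 ∩ cK) ∪ (y5 ∩ cK)) := by
          intro a ha
          obtain ⟨haK, hay⟩ := Finset.mem_inter.mp ha
          have haK1 : a ∈ K1 := by
            rw [hK1def]
            refine Finset.mem_inter.mpr ⟨haK, ?_⟩
            rcases Finset.mem_union.mp hay with h | h
            · exact Finset.mem_union.mpr (Or.inl (hy1L1 h))
            · exact Finset.mem_union.mpr (Or.inr (hy5L5 h))
          by_cases hc : a ∈ c
          · have hacK : a ∈ cK := by
              rw [hcKdef]
              exact Finset.mem_inter.mpr ⟨hc, haK1⟩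
            rcases Finset.mem_union.mp hay with h | h
            · exact Finset.mem_union.mpr (Or.inr (Finset.mem_union.mpr
                (Or.inl (Finset.mem_inter.mpr ⟨h, hacK⟩))))
            · exact Finset.mem_union.mpr (Or.inr (Finset.mem_union.mpr
                (Or.inr (Finset.mem_inter.mpr ⟨h, hacK⟩))))
          · exact Finset.mem_union.mpr (Or.inl (Finset.mem_sdiff.mpr ⟨haK1, hc⟩))
        have h1 := Finset.card_le_card hsub
        have h2 := Finset.card_union_le (K1 \ c) ((y1 ∩ cK) ∪ (y5 ∩ cK))
        have h3 := Finset.card_union_le (y1 ∩ cK) (y5 ∩ cK)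
        have h4 := Finset.card_sdiff_add_card_inter K1 c
        have h5 : cK.card = (K1 ∩ c).card := by rw [hcKdef, Finset.inter_comm]
        omega
      have hstruct : p + q + k1 ≤ 4*m + (M \ (U ∪ W)).card := by
        have s1 : p ≤ (U \ M).card := by
          rw [hpdef, hPdef]
          exact Finset.card_le_card Finset.inter_subset_left
        have s2 : q ≤ (W \ M).card := by
          rw [hqdef, hQdef]
          exact Finset.card_le_card Finset.inter_subset_left
        have s3 : (U \ M).card + (U ∩ M).card = 4*m := by
          rw [← hUc]
          exact Finset.card_sdiff_add_card_inter _ _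
        have s4 : (W \ M).card + (W ∩ M).card = 4*m := by
          rw [← hWc]
          exact Finset.card_sdiff_add_card_inter _ _
        have s5 : (M ∩ (U ∪ W)).card + (M \ (U ∪ W)).card = 4*m := by
          rw [← hMc]
          exact Finset.card_inter_add_card_sdiff _ _
        have s6 : (M ∩ U).card + (M ∩ W).card = (M ∩ (U ∪ W)).card + K.card := by
          have h1 := Finset.card_union_add_card_inter (M ∩ U) (M ∩ W)
          have e1 : (M ∩ U) ∪ (M ∩ W) = M ∩ (U ∪ W) := by
            ext a
            simp only [Finset.mem_inter, Finset.mem_union]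
            tauto
          have e2 : (M ∩ U) ∩ (M ∩ W) = K := by
            rw [hKdef]
            ext a
            simp only [Finset.mem_inter]
            tauto
          rw [e1, e2] at h1
          omega
        have s7 : (U ∩ M).card = (M ∩ U).card := by rw [Finset.inter_comm]
        have s8 : (W ∩ M).card = (M ∩ W).card := by rw [Finset.inter_comm]
        have s9 : k1 ≤ K.card := by
          rw [hk1def, hK1def]
          exact Finset.card_le_card Finset.inter_subset_left
        omega
      have hfinal : (y1 ∩ P).card + (y5 ∩ Q).card + (K ∩ (y1 ∪ y5)).card
          ≤ 2*m + (M \ (U ∪ W)).card := by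
        omega
      have hy1U : (U ∩ y1).card ≤ 2*m := by
        have h1 : (U ∩ y1).card ≤ y1.card := Finset.card_le_card Finset.inter_subset_right
        omega
      have hy5W : (W ∩ y5).card ≤ 2*m := by
        have h1 : (W ∩ y5).card ≤ y5.card := Finset.card_le_card Finset.inter_subset_right
        omega
      have hHF := p5aux_hf m U W M L1 L5 y1 y5 hy1L1 hy5L5
        (by rw [← hPdef, ← hQdef, ← hKdef]; exact hfinal)
      obtain ⟨S, hSM, hSc, hSU, hSW⟩ := p5aux_ssel m U W M y1 y5 hUc hWc hMc hy1U hy5W hHF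
      have hx2pool : 2*m ≤ (U \ (y1 ∪ S)).card := by
        have h1 := Finset.card_sdiff_add_card_inter U (y1 ∪ S)
        omega
      obtain ⟨x2, hx2sub, hx2c⟩ := Finset.exists_subset_card_eq hx2pool
      have hx4pool : 2*m ≤ (W \ (y5 ∪ S)).card := by
        have h1 := Finset.card_sdiff_add_card_inter W (y5 ∪ S)
        omega
      obtain ⟨x4, hx4sub, hx4c⟩ := Finset.exists_subset_card_eq hx4pool
      have hx2U : x2 ⊆ U := hx2sub.trans Finset.sdiff_subset
      have hx4W : x4 ⊆ W := hx4sub.trans Finset.sdiff_subset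
      have hdx2y1 : Disjoint x2 y1 := by
        rw [Finset.disjoint_left]
        intro a ha hb
        exact (Finset.mem_sdiff.mp (hx2sub ha)).2 (Finset.mem_union.mpr (Or.inl hb))
      have hdx2S : Disjoint x2 S := by
        rw [Finset.disjoint_left]
        intro a ha hb
        exact (Finset.mem_sdiff.mp (hx2sub ha)).2 (Finset.mem_union.mpr (Or.inr hb))
      have hdx4y5 : Disjoint x4 y5 := by
        rw [Finset.disjoint_left]
        intro a ha hb
        exact (Finset.mem_sdiff.mp (hx4sub ha)).2 (Finset.mem_union.mpr (Or.inl hb))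
      have hdx4S : Disjoint x4 S := by
        rw [Finset.disjoint_left]
        intro a ha hb
        exact (Finset.mem_sdiff.mp (hx4sub ha)).2 (Finset.mem_union.mpr (Or.inr hb))
      set fb : V → Finset ℕ := fun x =>
        if x = v₁ then y1 else if x = v₂ then x2 else if x = v₃ then S
        else if x = v₄ then x4 else if x = v₅ then y5
        else if h : x ≠ v₃ ∧ x ≠ v₄ then f' ⟨x, h⟩ else ∅ with hfbdef
      have efb1 : fb v₁ = y1 := by simp [hfbdef]
      have efb2 : fb v₂ = x2 := by simp [hfbdef, Ne.symm h12']
      have efb3 : fb v₃ = S := by simp [hfbdef, Ne.symm h13, Ne.symm hv23]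
      have efb4 : fb v₄ = x4 := by
        simp [hfbdef, Ne.symm h14, Ne.symm hv24, Ne.symm hv34]
      have efb5 : fb v₅ = y5 := by
        simp [hfbdef, Ne.symm h15, Ne.symm hv25, Ne.symm hv35, Ne.symm hv45]
      have efboff : ∀ (x : V) (h3 : x ≠ v₃) (h4 : x ≠ v₄), x ≠ v₁ → x ≠ v₂ → x ≠ v₅ →
          fb x = f' ⟨x, ⟨h3, h4⟩⟩ := by
        intro x h3 h4 h1 h2 h5
        simp only [hfbdef, if_neg h1, if_neg h2, if_neg h3, if_neg h4, if_neg h5,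
          dif_pos (show x ≠ v₃ ∧ x ≠ v₄ from ⟨h3, h4⟩)]
      refine ⟨fb, ?_, ?_, ?_⟩
      · intro x
        by_cases e1 : x = v₁
        · subst e1; rw [efb1]; exact hy1L1
        · by_cases e2 : x = v₂
          · subst e2; rw [efb2]; exact hx2U
          · by_cases e3 : x = v₃
            · subst e3; rw [efb3]; exact hSM
            · by_cases e4 : x = v₄
              · subst e4; rw [efb4]; exact hx4W
              · by_cases e5 : x = v₅
                · subst e5; rw [efb5]; exact hy5L5
                · rw [efboff x e3 e4 e1 e2 e5]
                  have eL : L'' ⟨x, ⟨e3, e4⟩⟩ = L x := by simp [hL''def, e1, e2, e5]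
                  exact eL ▸ hf1' _
      · intro x
        by_cases e1 : x = v₁
        · subst e1; rw [efb1]; exact hy1c
        · by_cases e2 : x = v₂
          · subst e2; rw [efb2]; exact hx2c
          · by_cases e3 : x = v₃
            · subst e3; rw [efb3]; exact hSc
            · by_cases e4 : x = v₄
              · subst e4; rw [efb4]; exact hx4c
              · by_cases e5 : x = v₅
                · subst e5; rw [efb5]; exact hy5c
                · rw [efboff x e3 e4 e1 e2 e5]
                  exact hf2' _
      · have key : ∀ a b, G.Adj a b →
            (a = v₁ ∨ a = v₂ ∨ a = v₃ ∨ a = v₄ ∨ a = v₅) → Disjoint (fb a) (fb b) := by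
          rintro a b hab (rfl | rfl | rfl | rfl | rfl)
          · rcases hu1char hab with rfl | rfl
            · rw [efb1, efb2]; exact hdx2y1.symm
            · rw [efb1, efboff b hu1ne3 hu1ne4 hu1ne1 hu1ne2 hu1ne5]
              exact hy1z1
          · rcases hN2 hab with rfl | rfl
            · rw [efb2, efb1]; exact hdx2y1
            · rw [efb2, efb3]; exact hdx2S
          · rcases hN3 hab with rfl | rfl
            · rw [efb3, efb2]; exact hdx2S.symm
            · rw [efb3, efb4]; exact hdx4S.symm
          · rcases hN4 hab with rfl | rfl
            · rw [efb4, efb3]; exact hdx4S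
            · rw [efb4, efb5]; exact hdx4y5
          · rcases hu5char hab with rfl | rfl
            · rw [efb5, efb4]; exact hdx4y5.symm
            · rw [efb5, efboff b hu5ne3 hu5ne4 hu5ne1 hu5ne2 hu5ne5]
              exact hy5z5
        intro a b hab
        by_cases ha : a = v₁ ∨ a = v₂ ∨ a = v₃ ∨ a = v₄ ∨ a = v₅
        · exact key a b hab ha
        · by_cases hb : b = v₁ ∨ b = v₂ ∨ b = v₃ ∨ b = v₄ ∨ b = v₅
          · exact (key b a hab.symm hb).symm
          · push_neg at ha hb
            obtain ⟨ha1, ha2, ha3, ha4, ha5⟩ := ha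
            obtain ⟨hb1, hb2, hb3, hb4, hb5⟩ := hb
            rw [efboff a ha3 ha4 ha1 ha2 ha5, efboff b hb3 hb4 hb1 hb2 hb5]
            exact hf3' ⟨hab.ne, Or.inl hab⟩
end
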